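/- arXiv:1004.5183 — 11 statements merged into one kernel-verified Lean document; each statement's English description precedes it below -/
import Mathlib

section
/- If G is an n-monophilic graph and v_1,...,v_k induce a complete subgraph of G, and G' is obtained from G by adding a new vertex adjacent exactly to v_1,...,v_k, then G' is n-monophilic. -/
open SimpleGraph

open Classical in
/-- Number of proper colorings of `G` from list assignment `L`. -/
noncomputable def colCount {V : Type*} [Fintype V] (G : SimpleGraph V) (L : V → Finset ℕ) : ℕ :=
  ((Fintype.piFinset L).filter fun γ => ∀ v w, G.Adj v w → γ v ≠ γ w).card

/-- `G` is `n`-monophilic: assigning the identical list `{1,…,n}` to every vertex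
minimizes the number of list colorings among all `n`-list assignments. -/
def Monophilic {V : Type*} [Fintype V] (G : SimpleGraph V) (n : ℕ) : Prop :=
  ∀ L : V → Finset ℕ, (∀ v, (L v).card = n) →
    colCount G (fun _ => Finset.Icc 1 n) ≤ colCount G L

open Classical in
lemma colCount_cone {V : Type*} [Fintype V] (G : SimpleGraph V)
    (s : Finset V)
    (G' : SimpleGraph (Option V))
    (hG' : ∀ a b : V, G'.Adj (some a) (some b) ↔ G.Adj a b)
    (hnew : ∀ a : V, G'.Adj none (some a) ↔ a ∈ s)
    (L : Option V → Finset ℕ) :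
    colCount G' L =
      ∑ γ ∈ (Fintype.piFinset (fun v => L (some v))).filter
          (fun γ => ∀ v w, G.Adj v w → γ v ≠ γ w),
        ((L none).filter (fun c => ∀ a ∈ s, c ≠ γ a)).card := by
  classical
  unfold colCount
  rw [Finset.card_eq_sum_card_fiberwise (f := fun γ' : Option V → ℕ => γ' ∘ some)
    (t := (Fintype.piFinset (fun v => L (some v))).filter
          (fun γ => ∀ v w, G.Adj v w → γ v ≠ γ w)) ?hmap]
  case hmap =>
    intro γ' hγ'
    rw [Finset.mem_coe] at hγ'
    show (γ' ∘ some) ∈ (Fintype.piFinset (fun v => L (some v))).filter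
          (fun γ => ∀ v w, G.Adj v w → γ v ≠ γ w)
    simp only [Finset.mem_filter, Fintype.mem_piFinset] at hγ' ⊢
    exact ⟨fun v => hγ'.1 (some v), fun v w hvw => hγ'.2 _ _ ((hG' v w).2 hvw)⟩
  refine Finset.sum_congr rfl fun γ hγ => ?_
  simp only [Finset.mem_filter, Fintype.mem_piFinset] at hγ
  refine Finset.card_bij' (fun γ' _ => γ' none)
    (fun c _ => fun o => o.elim c γ) ?_ ?_ ?_ ?_
  · intro γ' hγ'
    simp only [Finset.mem_filter, Fintype.mem_piFinset] at hγ' ⊢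
    obtain ⟨⟨hmem, hprop⟩, hres⟩ := hγ'
    refine ⟨hmem none, fun a ha => ?_⟩
    have := hprop none (some a) ((hnew a).2 ha)
    have hsome : γ' (some a) = γ a := congrFun hres a
    rw [← hsome]; exact this
  · intro c hc
    simp only [Finset.mem_filter, Fintype.mem_piFinset] at hc ⊢
    refine ⟨⟨fun o => ?_, fun v w hvw => ?_⟩, ?_⟩
    · cases o with
      | none => exact hc.1
      | some a => exact hγ.1 a
    · cases v with
      | none =>
        cases w with
        | none => exact absurd hvw (G'.irrefl)
        | some a => exact hc.2 a ((hnew a).1 hvw)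
      | some a =>
        cases w with
        | none => exact fun h => hc.2 a ((hnew a).1 hvw.symm) h.symm
        | some b => exact hγ.2 a b ((hG' a b).1 hvw)
    · rfl
  · intro γ' hγ'
    simp only [Finset.mem_filter] at hγ'
    funext o
    cases o with
    | none => rfl
    | some a => exact (congrFun hγ'.2 a).symm
  · intro c hc
    rfl

theorem stmt0 {V : Type*} [Fintype V] (G : SimpleGraph V) (n : ℕ)
    (s : Finset V) (hclique : G.IsClique ↑s)
    (hG : Monophilic G n)
    (G' : SimpleGraph (Option V))
    (hG' : ∀ a b : V, G'.Adj (some a) (some b) ↔ G.Adj a b)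
    (hnew : ∀ a : V, G'.Adj none (some a) ↔ a ∈ s) :
    Monophilic G' n := by
  classical
  intro L hL
  -- injectivity of proper colorings on the clique
  have hinj : ∀ γ : V → ℕ, (∀ v w, G.Adj v w → γ v ≠ γ w) → Set.InjOn γ ↑s := by
    intro γ hp a ha b hb heq
    by_contra hne
    exact hp a b (hclique ha hb hne) heq
  -- filter as sdiff
  have hfilt : ∀ (T : Finset ℕ) (γ : V → ℕ),
      T.filter (fun c => ∀ a ∈ s, c ≠ γ a) = T \ s.image γ := by
    intro T γ
    ext c
    simp only [Finset.mem_filter, Finset.mem_sdiff, Finset.mem_image, not_exists]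
    constructor
    · rintro ⟨h1, h2⟩
      exact ⟨h1, fun a ha => h2 a ha.1 ha.2.symm⟩
    · rintro ⟨h1, h2⟩
      exact ⟨h1, fun a ha hc => h2 a ⟨ha, hc.symm⟩⟩
  -- uniform case: exact computation
  have huni : colCount G' (fun _ => Finset.Icc 1 n)
      = (n - s.card) * colCount G (fun _ => Finset.Icc 1 n) := by
    rw [colCount_cone G s G' hG' hnew]
    rw [Finset.sum_congr rfl (g := fun _ => n - s.card) ?_]
    · rw [Finset.sum_const, smul_eq_mul, mul_comm]
      rfl
    · intro γ hγ
      simp only [Finset.mem_filter, Fintype.mem_piFinset] at hγ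
      rw [hfilt, Finset.card_sdiff_of_subset, Nat.card_Icc,
        Finset.card_image_of_injOn (hinj γ hγ.2)]
      · simp
      · intro c hc
        simp only [Finset.mem_image] at hc
        obtain ⟨a, _, rfl⟩ := hc
        exact hγ.1 a
  -- general lower bound
  have hterm : ∀ γ : V → ℕ,
      n - s.card ≤ ((L none).filter (fun c => ∀ a ∈ s, c ≠ γ a)).card := by
    intro γ
    rw [hfilt]
    calc n - s.card ≤ n - (s.image γ).card :=
          Nat.sub_le_sub_left Finset.card_image_le n
      _ = (L none).card - (s.image γ).card := by rw [hL none]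
      _ ≤ (L none \ s.image γ).card := Finset.le_card_sdiff _ _
  calc colCount G' (fun _ => Finset.Icc 1 n)
      = (n - s.card) * colCount G (fun _ => Finset.Icc 1 n) := huni
    _ ≤ (n - s.card) * colCount G (fun v => L (some v)) :=
        Nat.mul_le_mul_left _ (hG _ (fun v => hL (some v)))
    _ ≤ colCount G' L := by
        rw [colCount_cone G s G' hG' hnew]
        calc (n - s.card) * colCount G (fun v => L (some v))
            = ∑ _γ ∈ (Fintype.piFinset (fun v => L (some v))).filter
                (fun γ => ∀ v w, G.Adj v w → γ v ≠ γ w), (n - s.card) := by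
              rw [Finset.sum_const, smul_eq_mul, mul_comm]
              rfl
          _ ≤ _ := Finset.sum_le_sum fun γ _ => hterm γ
end

section
/- Every chordal graph is n-monophilic for every n ≥ 1. -/
open SimpleGraph

/-- `G` is chordal: every cycle of length greater than 3 has a chord, i.e. two vertices
of the cycle joined by an edge of `G` that is not an edge of the cycle. -/
def IsChordal {V : Type*} (G : SimpleGraph V) : Prop :=
  ∀ (u : V) (c : G.Walk u u), c.IsCycle → 3 < c.length →
    ∃ x ∈ c.support, ∃ y ∈ c.support, G.Adj x y ∧ s(x, y) ∉ c.edges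

section Aux

open Walk

set_option linter.unusedSectionVars false

variable {V : Type*} [DecidableEq V] {G : SimpleGraph V}


lemma isChordal_induce {V : Type*} {G : SimpleGraph V} (hG : IsChordal G) (s : Set V) :
    IsChordal (G.induce s) := by
  intro u c hc hl
  set f : G.induce s ↪g G := SimpleGraph.Embedding.induce s
  have hcyc : (c.map f.toHom).IsCycle := hc.map f.injective
  have hlen : 3 < (c.map f.toHom).length := by rwa [SimpleGraph.Walk.length_map]
  obtain ⟨x, hx, y, hy, hadj, hne⟩ := hG u (c.map f.toHom) hcyc hlen
  replace hx : x ∈ (c.map f.toHom).support := hx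
  replace hy : y ∈ (c.map f.toHom).support := hy
  replace hne : s(x, y) ∉ (c.map f.toHom).edges := hne
  rw [SimpleGraph.Walk.support_map, List.mem_map] at hx hy
  obtain ⟨x', hx', rfl⟩ := hx
  obtain ⟨y', hy', rfl⟩ := hy
  refine ⟨x', hx', y', hy', ?_, ?_⟩
  · exact hadj
  · intro h
    apply hne
    simp only [SimpleGraph.Walk.edges_map, List.mem_map]
    exact ⟨s(x', y'), h, rfl⟩


lemma shortcut {s t : V} (p : G.Walk s t) (x y : V) (hx : x ∈ p.support)
    (hy : y ∈ p.support) (hadj : G.Adj x y) (hne : s(x,y) ∉ p.edges) :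
    ∃ q : G.Walk s t, q.length < p.length ∧ ∀ z ∈ q.support, z ∈ p.support := by
  induction p with
  | nil =>
    simp only [Walk.support_nil, List.mem_singleton] at hx hy
    exact absurd (hx.trans hy.symm) hadj.ne
  | @cons u v w h p ih =>
    have key : ∀ a b : V, G.Adj a b → s(a,b) ∉ (Walk.cons h p).edges → a = u →
        b ∈ (Walk.cons h p).support →
        ∃ q : G.Walk u w, q.length < (Walk.cons h p).length ∧
          ∀ z ∈ q.support, z ∈ (Walk.cons h p).support := by
      intro a b hab hab' ha hb
      subst ha
      have hbv : b ≠ v := by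
        intro hbv'
        subst hbv'
        exact hab' (by simp)
      have hb' : b ∈ p.support := by
        rcases (by simpa using hb : b = a ∨ b ∈ p.support) with rfl | h1
        · exact absurd rfl hab.ne
        · exact h1
      refine ⟨Walk.cons hab (p.dropUntil b hb'), ?_, ?_⟩
      · have hspec := Walk.take_spec p hb'
        have hlen : p.length = (p.takeUntil b hb').length + (p.dropUntil b hb').length := by
          have := congrArg Walk.length hspec
          rw [Walk.length_append] at this
          omega
        have h1 : 1 ≤ (p.takeUntil b hb').length := by
          rcases Nat.eq_zero_or_pos (p.takeUntil b hb').length with hh | hh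
          · exact absurd (Walk.eq_of_length_eq_zero hh).symm hbv
          · exact hh
        simp only [Walk.length_cons]
        omega
      · intro z hz
        simp only [Walk.support_cons, List.mem_cons] at hz ⊢
        rcases hz with rfl | hz
        · exact Or.inl rfl
        · exact Or.inr (Walk.support_dropUntil_subset p hb' hz)
    by_cases hxu : x = u
    · exact key x y hadj hne hxu hy
    by_cases hyu : y = u
    · exact key y x hadj.symm (by rwa [Sym2.eq_swap]) hyu hx
    have hx' : x ∈ p.support := by
      rcases (by simpa using hx : x = u ∨ x ∈ p.support) with rfl | h1
      · exact absurd rfl hxu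
      · exact h1
    have hy' : y ∈ p.support := by
      rcases (by simpa using hy : y = u ∨ y ∈ p.support) with rfl | h1
      · exact absurd rfl hyu
      · exact h1
    obtain ⟨q, hq1, hq2⟩ := ih hx' hy' (fun hh => hne (by simp [hh]))
    refine ⟨Walk.cons h q, by simpa using hq1, ?_⟩
    intro z hz
    simp only [Walk.support_cons, List.mem_cons] at hz ⊢
    rcases hz with rfl | hz
    · exact Or.inl rfl
    · exact Or.inr (hq2 z hz)


/-- Reachability by a walk avoiding the set `S`. -/
def Reach (G : SimpleGraph V) (S : Finset V) (a b : V) : Prop :=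
  ∃ p : G.Walk a b, ∀ x ∈ p.support, x ∉ S

lemma Reach.refl {S : Finset V} {a : V} (ha : a ∉ S) : Reach G S a a :=
  ⟨Walk.nil, by simp [ha]⟩

lemma Reach.symm {S : Finset V} {a b : V} : Reach G S a b → Reach G S b a := by
  rintro ⟨p, hp⟩
  exact ⟨p.reverse, by simpa [Walk.support_reverse] using hp⟩

lemma Reach.trans {S : Finset V} {a b c : V} :
    Reach G S a b → Reach G S b c → Reach G S a c := by
  rintro ⟨p, hp⟩ ⟨q, hq⟩
  refine ⟨p.append q, fun x hx => ?_⟩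
  rcases (Walk.mem_support_append_iff p q).mp hx with h | h
  · exact hp x h
  · exact hq x h

lemma Reach.not_mem {S : Finset V} {a b : V} (h : Reach G S a b) : b ∉ S := by
  obtain ⟨p, hp⟩ := h
  exact hp b p.end_mem_support

lemma Reach.adj {S : Finset V} {a x y : V} (h : Reach G S a x) (hadj : G.Adj x y)
    (hy : y ∉ S) : Reach G S a y :=
  h.trans ⟨Walk.cons hadj Walk.nil, by
    intro z hz
    simp only [Walk.support_cons, Walk.support_nil, List.mem_cons, List.mem_singleton] at hz
    rcases hz with rfl | rfl | h'
    · exact h.not_mem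
    · exact hy
    · exact absurd h' (by simp)⟩

lemma Reach.of_walk {S : Finset V} {a x y : V} (h : Reach G S a x) (p : G.Walk x y)
    (hp : ∀ z ∈ p.support, z ∉ S) (z : V) (hz : z ∈ p.support) : Reach G S a z :=
  h.trans ⟨p.takeUntil z hz, fun w hw => hp w (Walk.support_takeUntil_subset p hz hw)⟩

lemma getVert_mem_support {u v : V} (p : G.Walk u v) (i : ℕ) : p.getVert i ∈ p.support := by
  induction p generalizing i with
  | nil => simp [Walk.getVert]
  | cons h q ih =>
    cases i with
    | zero => simp [Walk.getVert]
    | succ n =>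
      simp only [Walk.support_cons, List.mem_cons]
      exact Or.inr (ih n)

/-- If removing `s` from the separator `S` lets a walk from `a` to `b` through, but `S`
separates, then `s` has a neighbor reachable from `a` avoiding `S`. -/
lemma sep_neighbor_of_walk {S : Finset V} {a b s : V} (hs : s ∈ S) (ha : a ∉ S)
    (hsep : ¬ Reach G S a b) (p : G.Walk a b) (hp : ∀ x ∈ p.support, x ∉ S.erase s) :
    ∃ w, G.Adj s w ∧ Reach G S a w := by
  have hsmem : s ∈ p.support := by
    by_contra hsmem
    exact hsep ⟨p, fun x hx hxS => hp x hx (Finset.mem_erase.mpr ⟨fun h => hsmem (h ▸ hx), hxS⟩)⟩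
  set q : G.Walk a s := p.takeUntil s hsmem with hqdef
  have has : a ≠ s := fun h => ha (h ▸ hs)
  have hq1 : 1 ≤ q.length := by
    rcases Nat.eq_zero_or_pos q.length with h0 | h0
    · exact absurd (Walk.eq_of_length_eq_zero h0) has
    · exact h0
  set w : V := q.getVert (q.length - 1) with hwdef
  have hadj : G.Adj w s := by
    have h1 : q.length - 1 < q.length := by omega
    have := q.adj_getVert_succ h1
    rwa [show q.length - 1 + 1 = q.length by omega, Walk.getVert_length] at this
  have hwmem : w ∈ q.support := _root_.getVert_mem_support q _
  have hcnt : q.support.count s = 1 := Walk.count_support_takeUntil_eq_one p hsmem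
  have hsupq : ∀ z ∈ q.support, z ∉ S.erase s := fun z hz =>
    hp z (Walk.support_takeUntil_subset p hsmem hz)
  have hsnr : s ∉ (q.takeUntil w hwmem).support := by
    intro hsr
    have hspec := Walk.take_spec q hwmem
    have hcnt2 : q.support.count s =
        (q.takeUntil w hwmem).support.count s + ((q.dropUntil w hwmem).support.tail).count s := by
      conv_lhs => rw [← hspec]
      rw [Walk.support_append, List.count_append]
    have h1 : 1 ≤ (q.takeUntil w hwmem).support.count s := List.count_pos_iff.mpr hsr
    have h2 : 1 ≤ ((q.dropUntil w hwmem).support.tail).count s := by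
      apply List.count_pos_iff.mpr
      have hse : s ∈ (q.dropUntil w hwmem).support := Walk.end_mem_support _
      rcases (Walk.mem_support_iff _).mp hse with h' | h'
      · exact absurd h'.symm hadj.ne
      · exact h'
    omega
  refine ⟨w, hadj.symm, ⟨q.takeUntil w hwmem, fun z hz hzS => ?_⟩⟩
  have : z ∉ S.erase s := hsupq z (Walk.support_takeUntil_subset q hwmem hz)
  have hzs : z = s := by
    by_contra hne
    exact this (Finset.mem_erase.mpr ⟨hne, hzS⟩)
  exact hsnr (hzs ▸ hz)

lemma walk_len_one_adj {s t : V} (p : G.Walk s t) (h : p.length = 1) : G.Adj s t := by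
  cases p with
  | nil => simp at h
  | cons h' q =>
    cases q with
    | nil => exact h'
    | cons h'' q' => simp [Walk.length_cons] at h

/-- Existence of a minimum-length, hence induced, `s`-`t` path with interior in `R`. -/
lemma exists_min_path (s t : V) (hst : s ≠ t) (hnadj : ¬ G.Adj s t) (R : V → Prop)
    (xs xt : V) (hxs : G.Adj s xs) (hRxs : R xs) (hxt : G.Adj t xt) (hRxt : R xt)
    (hconn : ∀ x y, R x → R y → ∃ w : G.Walk x y, ∀ z ∈ w.support, R z) :
    ∃ p : G.Walk s t, p.IsPath ∧ 2 ≤ p.length ∧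
      (∀ z ∈ p.support, z = s ∨ z = t ∨ R z) ∧
      (∀ x ∈ p.support, ∀ y ∈ p.support, G.Adj x y → s(x,y) ∈ p.edges) := by
  classical
  set P : G.Walk s t → Prop := fun q => ∀ z ∈ q.support, z = s ∨ z = t ∨ R z with hP
  obtain ⟨w, hw⟩ := hconn xs xt hRxs hRxt
  have hp0 : ∃ q : G.Walk s t, P q := by
    refine ⟨Walk.cons hxs (w.concat hxt.symm), ?_⟩
    intro z hz
    simp only [Walk.support_cons, Walk.support_concat, List.concat_eq_append, List.mem_cons,
      List.mem_append, List.mem_singleton] at hz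
    rcases hz with rfl | hz | rfl | h
    · exact Or.inl rfl
    · exact Or.inr (Or.inr (hw z hz))
    · exact Or.inr (Or.inl rfl)
    · exact absurd h List.not_mem_nil
  have hex : ∃ n, ∃ q : G.Walk s t, P q ∧ q.length = n := by
    obtain ⟨q, hq⟩ := hp0
    exact ⟨q.length, q, hq, rfl⟩
  obtain ⟨p1, hP1, hl1⟩ := Nat.find_spec hex
  have hminlen : ∀ q : G.Walk s t, P q → Nat.find hex ≤ q.length := fun q hq =>
    Nat.find_min' hex ⟨q, hq, rfl⟩
  set p : G.Walk s t := p1.bypass with hpdef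
  have hPp : P p := fun z hz => hP1 z (Walk.support_bypass_subset p1 hz)
  have hlep : p.length ≤ Nat.find hex := hl1 ▸ Walk.length_bypass_le p1
  have hminp : ∀ q : G.Walk s t, P q → p.length ≤ q.length := fun q hq =>
    le_trans hlep (hminlen q hq)
  have hpath : p.IsPath := Walk.bypass_isPath p1
  have hlen2 : 2 ≤ p.length := by
    rcases Nat.lt_or_ge p.length 2 with h2 | h2
    · interval_cases h : p.length
      · exact absurd (Walk.eq_of_length_eq_zero h) hst
      · exact absurd (walk_len_one_adj p h) hnadj
    · exact h2
  refine ⟨p, hpath, hlen2, hPp, ?_⟩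
  intro x hx y hy hxy
  by_contra hne
  obtain ⟨q, hq1, hq2⟩ := shortcut p x y hx hy hxy hne
  have : P q := fun z hz => hPp z (hq2 z hz)
  exact absurd (hminp q this) (by omega)

/-- A minimum-cardinality `a`-`b` separator in a chordal graph is a clique. -/
lemma sep_clique (hG : IsChordal G) {S : Finset V} {a b s t : V}
    (ha : a ∉ S) (hb : b ∉ S) (hsep : ¬ Reach G S a b)
    (hmin : ∀ S' : Finset V, S'.card < S.card → a ∉ S' → b ∉ S' → Reach G S' a b)
    (hs : s ∈ S) (ht : t ∈ S) (hst : s ≠ t) : G.Adj s t := by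
  classical
  by_contra hadj
  have hAB : ∀ z, Reach G S a z → Reach G S b z → False := fun z h1 h2 =>
    hsep (h1.trans h2.symm)
  have nbrA : ∀ u ∈ S, ∃ w, G.Adj u w ∧ Reach G S a w := by
    intro u hu
    obtain ⟨p, hp⟩ := hmin (S.erase u) (Finset.card_erase_lt_of_mem hu)
      (fun h => ha (Finset.mem_of_mem_erase h)) (fun h => hb (Finset.mem_of_mem_erase h))
    exact sep_neighbor_of_walk hu ha hsep p hp
  have nbrB : ∀ u ∈ S, ∃ w, G.Adj u w ∧ Reach G S b w := by
    intro u hu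
    obtain ⟨p, hp⟩ := hmin (S.erase u) (Finset.card_erase_lt_of_mem hu)
      (fun h => ha (Finset.mem_of_mem_erase h)) (fun h => hb (Finset.mem_of_mem_erase h))
    exact sep_neighbor_of_walk hu hb (fun h => hsep h.symm) p.reverse
      (by
        intro x hx
        rw [Walk.support_reverse, List.mem_reverse] at hx
        exact hp x hx)
  have hconn : ∀ (c : V), ∀ x y, Reach G S c x → Reach G S c y →
      ∃ w : G.Walk x y, ∀ z ∈ w.support, Reach G S c z := by
    intro c x y hx hy
    obtain ⟨w, hw⟩ := hx.symm.trans hy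
    exact ⟨w, fun z hz => hx.of_walk w hw z hz⟩
  obtain ⟨xs, hxs, hRxs⟩ := nbrA s hs
  obtain ⟨xt, hxt, hRxt⟩ := nbrA t ht
  obtain ⟨ys, hys, hRys⟩ := nbrB s hs
  obtain ⟨yt, hyt, hRyt⟩ := nbrB t ht
  obtain ⟨pA, hApath, hAlen, hAmem, hAchordless⟩ := exists_min_path s t hst hadj
    (Reach G S a) xs xt hxs hRxs hxt hRxt (hconn a)
  obtain ⟨pB, hBpath, hBlen, hBmem, hBchordless⟩ := exists_min_path s t hst hadj
    (Reach G S b) ys yt hys hRys hyt hRyt (hconn b)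
  -- vertices common to both paths are endpoints
  have hcommon : ∀ z, z ∈ pA.support → z ∈ pB.support → z = s ∨ z = t := by
    intro z hzA hzB
    rcases hAmem z hzA with h1 | h1 | h1
    · exact Or.inl h1
    · exact Or.inr h1
    rcases hBmem z hzB with h2 | h2 | h2
    · exact Or.inl h2
    · exact Or.inr h2
    exact absurd (hAB z h1 h2) (by simp)
  -- build the cycle
  set c : G.Walk s s := pA.append pB.reverse with hcdef
  have hclen : c.length = pA.length + pB.length := by
    rw [hcdef, Walk.length_append, Walk.length_reverse]
  have hcedges : c.edges = pA.edges ++ pB.edges.reverse := by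
    rw [hcdef, Walk.edges_append, Walk.edges_reverse]
  have hcyc : c.IsCycle := by
    refine ⟨⟨⟨?_⟩, ?_⟩, ?_⟩
    · -- edges nodup
      rw [hcedges, List.nodup_append]
      refine ⟨hApath.isTrail.edges_nodup, List.nodup_reverse.mpr hBpath.isTrail.edges_nodup, ?_⟩
      intro e heA e' heB hee
      subst hee
      rw [List.mem_reverse] at heB
      refine Sym2.ind (fun x y heA heB => ?_) e heA heB
      · have hx : x = s ∨ x = t := hcommon x
          (pA.fst_mem_support_of_mem_edges heA) (pB.fst_mem_support_of_mem_edges heB)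
        have hy : y = s ∨ y = t := hcommon y
          (pA.snd_mem_support_of_mem_edges heA) (pB.snd_mem_support_of_mem_edges heB)
        have hxyadj : G.Adj x y := pA.adj_of_mem_edges heA
        rcases hx with rfl | rfl <;> rcases hy with rfl | rfl
        · exact G.loopless.irrefl _ hxyadj
        · exact hadj hxyadj
        · exact hadj hxyadj.symm
        · exact G.loopless.irrefl _ hxyadj
    · -- c ≠ nil
      intro h
      have : c.length = 0 := by rw [h]; rfl
      omega
    · -- support tail nodup
      have htail : c.support.tail = pA.support.tail ++ pB.reverse.support.tail :=
        Walk.tail_support_append pA pB.reverse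
      rw [htail, Walk.support_reverse, List.tail_reverse, List.nodup_append]
      have hAnodup : pA.support.Nodup := hApath.support_nodup
      have hBnodup : pB.support.Nodup := hBpath.support_nodup
      refine ⟨?_, ?_, ?_⟩
      · rw [Walk.support_eq_cons pA] at hAnodup
        exact hAnodup.of_cons
      · exact List.nodup_reverse.mpr (hBnodup.sublist (List.dropLast_sublist _))
      · intro z hzA z' hzB hzz
        subst hzz
        rw [List.mem_reverse] at hzB
        have hzA' : z ∈ pA.support := by
          rw [Walk.support_eq_cons pA]
          exact List.mem_cons_of_mem _ hzA
        have hzB' : z ∈ pB.support := List.mem_of_mem_dropLast hzB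
        rcases hcommon z hzA' hzB' with rfl | rfl
        · rw [Walk.support_eq_cons pA] at hAnodup
          exact (List.nodup_cons.mp hAnodup).1 hzA
        · have hlast : pB.support.getLast (Walk.support_ne_nil _) = z := pB.getLast_support
          have h2 := List.dropLast_append_getLast (l := pB.support) (Walk.support_ne_nil pB)
          rw [hlast] at h2
          have := hBnodup
          rw [← h2, List.nodup_append] at this
          exact this.2.2 z hzB z (List.mem_singleton_self z) rfl
  have hlen4 : 3 < c.length := by omega
  obtain ⟨x, hx, y, hy, hxy, hne⟩ := hG s c hcyc hlen4
  have hmemc : ∀ z, z ∈ c.support → z ∈ pA.support ∨ z ∈ pB.support := by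
    intro z hz
    rcases (Walk.mem_support_append_iff _ _).mp hz with h | h
    · exact Or.inl h
    · rw [Walk.support_reverse, List.mem_reverse] at h
      exact Or.inr h
  have hedgeA : ∀ e ∈ pA.edges, e ∈ c.edges := by
    intro e he; rw [hcedges]; exact List.mem_append_left _ he
  have hedgeB : ∀ e ∈ pB.edges, e ∈ c.edges := by
    intro e he; rw [hcedges]; exact List.mem_append_right _ (List.mem_reverse.mpr he)
  -- derive contradiction from the chord
  have key : ∀ u w : V, G.Adj u w → u ∈ pA.support → u ∉ pB.support → w ∈ pB.support →
      w ∉ pA.support → False := by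
    intro u w huw huA huB hwB hwA
    have hu : Reach G S a u := by
      rcases hAmem u huA with rfl | rfl | h
      · exact absurd pB.start_mem_support huB
      · exact absurd pB.end_mem_support huB
      · exact h
    have hw : Reach G S b w := by
      rcases hBmem w hwB with rfl | rfl | h
      · exact absurd pA.start_mem_support hwA
      · exact absurd pA.end_mem_support hwA
      · exact h
    exact hAB w (hu.adj huw hw.not_mem) hw
  rcases hmemc x hx with hxA | hxB
  · rcases hmemc y hy with hyA | hyB
    · exact hne (hedgeA _ (hAchordless x hxA y hyA hxy))
    · by_cases hxB : x ∈ pB.support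
      · exact hne (hedgeB _ (hBchordless x hxB y hyB hxy))
      · by_cases hyA : y ∈ pA.support
        · exact hne (hedgeA _ (hAchordless x hxA y hyA hxy))
        · exact key x y hxy hxA hxB hyB hyA
  · rcases hmemc y hy with hyA | hyB
    · by_cases hyB : y ∈ pB.support
      · exact hne (hedgeB _ (hBchordless x hxB y hyB hxy))
      · by_cases hxA : x ∈ pA.support
        · exact hne (hedgeA _ (hAchordless x hxA y hyA hxy))
        · exact key y x hxy.symm hyA hyB hxB hxA
    · exact hne (hedgeB _ (hBchordless x hxB y hyB hxy))

/-- A simplicial vertex: its neighborhood is a clique. -/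
def IsSimplicial (G : SimpleGraph V) (v : V) : Prop :=
  ∀ x y, G.Adj v x → G.Adj v y → x ≠ y → G.Adj x y

lemma induce_simplicial_lift {s : Set V} {v : ↥s}
    (hsimp : IsSimplicial (G.induce s) v)
    (hnbr : ∀ x : V, G.Adj ↑v x → x ∈ s) : IsSimplicial G ↑v := by
  intro x y hx hy hxy
  have hxs : x ∈ s := hnbr x hx
  have hys : y ∈ s := hnbr y hy
  have := hsimp ⟨x, hxs⟩ ⟨y, hys⟩ (by simpa using hx) (by simpa using hy)
    (by simp [Subtype.ext_iff, hxy])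
  simpa using this

universe u

theorem dirac_aux (n : ℕ) : ∀ {V : Type u} [Fintype V] [DecidableEq V]
    (G : SimpleGraph V), Fintype.card V ≤ n → IsChordal G →
    (∀ x y : V, x ≠ y → G.Adj x y) ∨
      ∃ u v : V, u ≠ v ∧ ¬ G.Adj u v ∧ IsSimplicial G u ∧ IsSimplicial G v := by
  induction n with
  | zero =>
    intro V _ _ G hcard _
    left
    intro x
    exact absurd (Fintype.card_pos_iff.mpr ⟨x⟩) (by omega)
  | succ n ih =>
    intro V _ _ G hcard hG
    by_cases hcomp : ∀ x y : V, x ≠ y → G.Adj x y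
    · exact Or.inl hcomp
    right
    push_neg at hcomp
    obtain ⟨a, b, hab, hnadj⟩ := hcomp
    -- a separator exists
    have hsep0 : ∃ S : Finset V, a ∉ S ∧ b ∉ S ∧ ¬ Reach G S a b := by
      classical
      refine ⟨Finset.univ \ {a, b}, by simp, by simp, ?_⟩
      rintro ⟨p, hp⟩
      have hlen1 : 1 ≤ p.length := by
        rcases Nat.eq_zero_or_pos p.length with h0 | h0
        · exact absurd (Walk.eq_of_length_eq_zero h0) hab
        · exact h0
      have hadj01 := p.adj_getVert_succ (i := 0) (by omega)
      rw [Walk.getVert_zero] at hadj01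
      have hne_a : p.getVert 1 ≠ a := hadj01.ne.symm
      have hne_b : p.getVert 1 ≠ b := by
        intro h
        rw [h] at hadj01
        exact hnadj hadj01
      exact hp (p.getVert 1) (_root_.getVert_mem_support p 1)
        (by simp [hne_a, hne_b])
    classical
    have hexk : ∃ k, ∃ S : Finset V, (a ∉ S ∧ b ∉ S ∧ ¬ Reach G S a b) ∧ S.card = k := by
      obtain ⟨S, h1, h2, h3⟩ := hsep0
      exact ⟨S.card, S, ⟨h1, h2, h3⟩, rfl⟩
    obtain ⟨S, ⟨haS, hbS, hsep⟩, hScard⟩ := Nat.find_spec hexk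
    have hmin : ∀ S' : Finset V, S'.card < S.card → a ∉ S' → b ∉ S' → Reach G S' a b := by
      intro S' hlt h1 h2
      by_contra h3
      have := Nat.find_min' hexk ⟨S', ⟨h1, h2, h3⟩, rfl⟩
      omega
    have hclique : ∀ u ∈ S, ∀ w ∈ S, u ≠ w → G.Adj u w := fun u hu w hw huw =>
      sep_clique hG haS hbS hsep hmin hu hw huw
    -- one simplicial vertex on each side
    have side : ∀ c d : V, c ∉ S → d ∉ S → ¬ Reach G S c d →
        (∀ S' : Finset V, S'.card < S.card → c ∉ S' → d ∉ S' → Reach G S' c d) →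
        ∃ v : V, Reach G S c v ∧ IsSimplicial G v := by
      intro c d hcS hdS hcd hmin'
      classical
      set W : Set V := {z | Reach G S c z ∨ z ∈ S} with hW
      have hdW : d ∉ W := by
        intro h
        rcases h with h | h
        · exact hcd h
        · exact hdS h
      have hcW : c ∈ W := Or.inl (Reach.refl hcS)
      have hcardW : Fintype.card ↥W < Fintype.card V := by
        apply Fintype.card_subtype_lt (x := d)
        exact hdW
      have hchordW : IsChordal (G.induce W) := isChordal_induce hG W
      have hnbrW : ∀ (v : ↥W), Reach G S c ↑v → ∀ x : V, G.Adj ↑v x → x ∈ W := by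
        intro v hv x hx
        by_cases hxS : x ∈ S
        · exact Or.inr hxS
        · exact Or.inl (hv.adj hx hxS)
      rcases ih (G.induce W) (by omega) hchordW with hcompW | ⟨u, v, huv, hnadjuv, hu, hv⟩
      · refine ⟨c, Reach.refl hcS, ?_⟩
        have := induce_simplicial_lift (G := G) (s := W) (v := ⟨c, hcW⟩) ?_ ?_
        · exact this
        · intro x y hx hy hxy
          exact hcompW x y hxy
        · intro x hx
          by_cases hxS : x ∈ S
          · exact Or.inr hxS
          · exact Or.inl ((Reach.refl hcS).adj hx hxS)
      · -- at least one of u, v is outside S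
        have : (↑u : V) ∉ S ∨ (↑v : V) ∉ S := by
          by_contra h
          push_neg at h
          apply hnadjuv
          have : G.Adj ↑u ↑v := hclique _ h.1 _ h.2 (fun he => huv (Subtype.ext he))
          exact this
        rcases this with h | h
        · have hreach : Reach G S c ↑u := by
            rcases u.2 with h' | h'
            · exact h'
            · exact absurd h' h
          exact ⟨↑u, hreach, induce_simplicial_lift hu (hnbrW u hreach)⟩
        · have hreach : Reach G S c ↑v := by
            rcases v.2 with h' | h'
            · exact h'
            · exact absurd h' h
          exact ⟨↑v, hreach, induce_simplicial_lift hv (hnbrW v hreach)⟩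
    obtain ⟨vA, hvA, hvAsimp⟩ := side a b haS hbS hsep hmin
    obtain ⟨vB, hvB, hvBsimp⟩ := side b a hbS haS (fun h => hsep h.symm)
      (fun S' h1 h2 h3 => (hmin S' h1 h3 h2).symm)
    refine ⟨vA, vB, ?_, ?_, hvAsimp, hvBsimp⟩
    · rintro rfl
      exact hsep (hvA.trans hvB.symm)
    · intro hadj
      exact hsep ((hvA.adj hadj hvB.not_mem).trans hvB.symm)

/-- Every nonempty chordal graph has a simplicial vertex. -/
theorem exists_simplicial {V : Type u} [Fintype V] [DecidableEq V] (G : SimpleGraph V)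
    (hG : IsChordal G) (hne : Nonempty V) : ∃ v : V, IsSimplicial G v := by
  rcases dirac_aux (Fintype.card V) G le_rfl hG with h | ⟨u, v, _, _, hu, _⟩
  · obtain ⟨v⟩ := hne
    exact ⟨v, fun x y hx hy hxy => h x y hxy⟩
  · exact ⟨u, hu⟩

open Classical in
noncomputable def colSet {V : Type*} [Fintype V] (G : SimpleGraph V) (L : V → Finset ℕ) :
    Finset (V → ℕ) :=
  (Fintype.piFinset L).filter fun γ => ∀ v w, G.Adj v w → γ v ≠ γ w

lemma colCount_eq {V : Type*} [Fintype V] (G : SimpleGraph V) (L : V → Finset ℕ) :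
    colCount G L = (colSet G L).card := rfl

open Classical in
noncomputable instance instFintypeNe {V : Type*} [Fintype V] (v : V) :
    Fintype {x : V // x ≠ v} :=
  Subtype.fintype _

open Classical in
noncomputable def nbrs {V : Type*} [Fintype V] (G : SimpleGraph V) (v : V) :
    Finset {x : V // x ≠ v} :=
  Finset.univ.filter (fun w : {x : V // x ≠ v} => G.Adj v ↑w)

open Classical in
lemma mem_nbrs {V : Type*} [Fintype V] (G : SimpleGraph V) (v : V) (w : {x : V // x ≠ v}) :
    w ∈ nbrs G v ↔ G.Adj v ↑w := by
  unfold nbrs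
  simp

open Classical in
lemma mem_colSet {V : Type*} [Fintype V] (G : SimpleGraph V) (L : V → Finset ℕ)
    (γ : V → ℕ) : γ ∈ colSet G L ↔ (∀ v, γ v ∈ L v) ∧ ∀ v w, G.Adj v w → γ v ≠ γ w := by
  unfold colSet
  rw [Finset.mem_filter, Fintype.mem_piFinset]

section Counting
variable {V : Type u} [Fintype V]

open Finset

open Classical in
/-- The fundamental factorization over a vertex. -/
lemma colCount_sum (G : SimpleGraph V) (v : V) (L : V → Finset ℕ) :
    colCount G L =
      ∑ γ' ∈ colSet (G.induce {x | x ≠ v}) (fun x => L ↑x),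
        ((L v) \ (nbrs G v).image γ').card := by
  rw [colCount_eq]
  set s : Set V := {x | x ≠ v} with hs
  set P := colSet G L with hP
  set P' := colSet (G.induce s) (fun x : {x : V // x ≠ v} => L ↑x) with hP'
  set N' := nbrs G v with hN'
  set res : (V → ℕ) → ({x : V // x ≠ v} → ℕ) := fun γ x => γ ↑x with hres
  have hmaps : ∀ γ ∈ P, res γ ∈ P' := by
    intro γ hγ
    rw [hP, mem_colSet] at hγ
    rw [hP', mem_colSet]
    exact ⟨fun x => hγ.1 ↑x, fun x y hxy => hγ.2 ↑x ↑y hxy⟩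
  rw [Finset.card_eq_sum_card_fiberwise hmaps]
  apply Finset.sum_congr rfl
  intro γ' hγ'
  rw [hP', mem_colSet] at hγ'
  apply Finset.card_bij (fun γ _ => γ v)
  · intro γ hγ
    rw [Finset.mem_filter, hP, mem_colSet] at hγ
    obtain ⟨⟨hγ1, hγ2⟩, hγ3⟩ := hγ
    rw [Finset.mem_sdiff]
    refine ⟨hγ1 v, ?_⟩
    rw [Finset.mem_image]
    rintro ⟨w, hw, hwv⟩
    rw [hN', mem_nbrs] at hw
    have : γ' w = γ ↑w := by rw [← hγ3]
    rw [this] at hwv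
    exact hγ2 v ↑w hw hwv.symm
  · intro γ₁ h₁ γ₂ h₂ hv
    rw [Finset.mem_filter] at h₁ h₂
    funext x
    by_cases hx : x = v
    · subst hx; exact hv
    · have e1 : γ₁ x = γ' ⟨x, hx⟩ := by rw [← h₁.2]
      have e2 : γ₂ x = γ' ⟨x, hx⟩ := by rw [← h₂.2]
      rw [e1, e2]
  · intro c hc
    rw [Finset.mem_sdiff] at hc
    refine ⟨fun x => if hx : x = v then c else γ' ⟨x, hx⟩, ?_, ?_⟩
    · rw [Finset.mem_filter, hP, mem_colSet]
      refine ⟨⟨?_, ?_⟩, ?_⟩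
      · intro x
        by_cases hx : x = v
        · subst hx; simpa using hc.1
        · simp only [hx, dif_neg]
          exact hγ'.1 ⟨x, hx⟩
      · intro x y hxy
        by_cases hx : x = v <;> by_cases hy : y = v
        · exact absurd hxy (by rw [hx, hy]; exact G.loopless.irrefl v)
        · subst hx
          simp only [dif_pos, hy, dif_neg]
          intro h
          apply hc.2
          rw [Finset.mem_image]
          exact ⟨⟨y, hy⟩, by rw [hN', mem_nbrs]; exact hxy, h.symm⟩
        · subst hy
          simp only [dif_pos, hx, dif_neg]
          intro h
          apply hc.2
          rw [Finset.mem_image]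
          exact ⟨⟨x, hx⟩, by rw [hN', mem_nbrs]; exact hxy.symm, h⟩
        · simp only [hx, hy, dif_neg]
          exact hγ'.2 ⟨x, hx⟩ ⟨y, hy⟩ hxy
      · funext x
        have hx : (↑x : V) ≠ v := x.2
        simp only [hres, dif_neg hx]
        rfl
    · simp
end Counting

open Classical in
lemma colCount_empty {V : Type u} [Fintype V] (hV : IsEmpty V) (G : SimpleGraph V)
    (L : V → Finset ℕ) : colCount G L = 1 := by
  rw [colCount_eq]
  rw [show colSet G L = {fun v => (hV.false v).elim} from ?_]
  · simp
  · ext γ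
    rw [mem_colSet]
    constructor
    · intro _
      rw [Finset.mem_singleton]
      funext v
      exact (hV.false v).elim
    · intro _
      exact ⟨fun v => (hV.false v).elim, fun v => (hV.false v).elim⟩

open Classical in
theorem colCount_le (n : ℕ) (N : ℕ) : ∀ {V : Type u} [Fintype V] (G : SimpleGraph V),
    Fintype.card V ≤ N → IsChordal G → ∀ L : V → Finset ℕ, (∀ v, (L v).card = n) →
    colCount G (fun _ => Finset.Icc 1 n) ≤ colCount G L := by
  induction N with
  | zero =>
    intro V _ G hcard _ L _
    have hV : IsEmpty V := by
      rwa [← Fintype.card_eq_zero_iff, ← Nat.le_zero]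
    rw [colCount_empty hV, colCount_empty hV]
  | succ N ihN =>
    intro V _ G hcard hG L hL
    rcases isEmpty_or_nonempty V with hV | hV
    · rw [colCount_empty hV, colCount_empty hV]
    obtain ⟨v, hv⟩ := @exists_simplicial V _ (Classical.decEq V) G hG hV
    set d : ℕ := (nbrs G v).card with hd
    have hcard' : Fintype.card {x : V // x ≠ v} ≤ N := by
      have hlt : Fintype.card {x : V // x ≠ v} < Fintype.card V := by
        apply Fintype.card_lt_of_injective_of_notMem (f := fun x : {x : V // x ≠ v} => ↑x)
          (fun x y h => Subtype.ext h) (b := v)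
        rintro ⟨⟨x, hx⟩, h⟩
        exact hx h
      omega
    have hchord' : IsChordal (G.induce {x | x ≠ v}) := isChordal_induce hG {x | x ≠ v}
    -- constant side
    have hconst : colCount G (fun _ => Finset.Icc 1 n) =
        (colCount (G.induce {x | x ≠ v}) (fun _ => Finset.Icc 1 n)) * (n - d) := by
      rw [colCount_sum G v (fun _ => Finset.Icc 1 n)]
      rw [Finset.sum_congr rfl (g := fun _ => n - d) ?_]
      · rw [Finset.sum_const, smul_eq_mul, ← colCount_eq]
      · intro γ' hγ'
        rw [mem_colSet] at hγ'
        have hsub : (nbrs G v).image γ' ⊆ Finset.Icc 1 n := by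
          intro c hc
          rw [Finset.mem_image] at hc
          obtain ⟨w, hw, rfl⟩ := hc
          exact hγ'.1 w
        have hcardim : (Finset.image γ' (nbrs G v)).card = d := by
          rw [hd]
          apply Finset.card_image_of_injOn
          intro w₁ hw₁ w₂ hw₂ heq
          by_contra hne
          have hb₁ : G.Adj v ↑w₁ := (mem_nbrs G v w₁).mp (Finset.mem_coe.mp hw₁)
          have hb₂ : G.Adj v ↑w₂ := (mem_nbrs G v w₂).mp (Finset.mem_coe.mp hw₂)
          have hcne : (↑w₁ : V) ≠ ↑w₂ := fun h => hne (Subtype.ext h)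
          have hadj : G.Adj ↑w₁ ↑w₂ := hv ↑w₁ ↑w₂ hb₁ hb₂ hcne
          exact hγ'.2 w₁ w₂ hadj heq
        rw [Finset.card_sdiff_of_subset hsub, hcardim, Nat.card_Icc]
        simp
    -- list side
    have hlist : (colCount (G.induce {x | x ≠ v}) (fun x => L ↑x)) * (n - d) ≤ colCount G L := by
      rw [colCount_sum G v L]
      have hterm : ∀ γ' ∈ colSet (G.induce {x | x ≠ v}) (fun x => L ↑x),
          n - d ≤ ((L v) \ (nbrs G v).image γ').card := by
        intro γ' _
        have h1 : (L v).card - ((nbrs G v).image γ').card ≤ ((L v) \ (nbrs G v).image γ').card :=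
          Finset.le_card_sdiff _ _
        have h2 : ((nbrs G v).image γ').card ≤ d := Finset.card_image_le
        have h3 : (L v).card = n := hL v
        omega
      calc (colCount (G.induce {x | x ≠ v}) (fun x => L ↑x)) * (n - d)
          = ∑ _γ' ∈ colSet (G.induce {x | x ≠ v}) (fun x => L ↑x), (n - d) := by
            rw [Finset.sum_const, smul_eq_mul, ← colCount_eq]
        _ ≤ _ := Finset.sum_le_sum hterm
    have hIH : colCount (G.induce {x | x ≠ v}) (fun _ => Finset.Icc 1 n) ≤
        colCount (G.induce {x | x ≠ v}) (fun x => L ↑x) :=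
      ihN (G.induce {x | x ≠ v}) hcard' hchord' _ (fun x => hL ↑x)
    calc colCount G (fun _ => Finset.Icc 1 n)
        = (colCount (G.induce {x | x ≠ v}) (fun _ => Finset.Icc 1 n)) * (n - d) := hconst
      _ ≤ (colCount (G.induce {x | x ≠ v}) (fun x => L ↑x)) * (n - d) :=
          Nat.mul_le_mul_right _ hIH
      _ ≤ colCount G L := hlist

end Aux

theorem stmt1 {V : Type*} [Fintype V] (G : SimpleGraph V) (hG : IsChordal G)
    (n : ℕ) (hn : 1 ≤ n) : Monophilic G n := by
  intro L hL
  exact colCount_le n (Fintype.card V) G le_rfl hG L hL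
end

section
/- Every tree is n-monophilic for every n ≥ 1. -/
open SimpleGraph

section Aux

open Classical Finset

variable {V : Type*} [Fintype V]

/-- With no edges, colCount is the product of list sizes. -/
lemma colCount_of_subsingleton (G : SimpleGraph V) (hs : Fintype.card V ≤ 1)
    (L : V → Finset ℕ) : colCount G L = ∏ v, (L v).card := by
  have hns : ∀ v w, ¬ G.Adj v w := by
    intro v w h
    have : v = w := by
      have := Fintype.card_le_one_iff.mp hs
      exact this v w
    exact G.loopless.irrefl v (this ▸ h)
  unfold colCount
  rw [Finset.filter_true_of_mem (fun γ _ => fun v w h => absurd h (hns v w))]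
  simp [Fintype.card_piFinset]

/-- Transfer a walk avoiding `v0` to the subtype graph. -/
lemma reachable_comap (G : SimpleGraph V) (v0 : V) {a b : V} (p : G.Walk a b)
    (hp : v0 ∉ p.support) (ha : a ≠ v0) (hb : b ≠ v0) :
    (G.comap (Subtype.val : {w : V // w ≠ v0} → V)).Reachable ⟨a, ha⟩ ⟨b, hb⟩ := by
  induction p with
  | nil => exact Reachable.refl _
  | @cons x y z h q ih =>
    rw [SimpleGraph.Walk.support_cons] at hp
    have hy : y ≠ v0 := fun hy => hp (by rw [← hy]; exact List.mem_cons_of_mem _ q.start_mem_support)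
    have h1 : (G.comap (Subtype.val : {w : V // w ≠ v0} → V)).Adj ⟨x, ha⟩ ⟨y, hy⟩ := h
    exact (h1.reachable).trans (ih (fun hm => hp (List.mem_cons_of_mem _ hm)) hy hb)

/-- Counting colorings of a graph with a degree-one vertex `v0` whose unique
neighbor is `u`, in terms of colorings of the subtype graph. -/
lemma colCount_eq_sum (G : SimpleGraph V) (v0 u : V) (hu : u ≠ v0)
    (hvu : ∀ w, G.Adj v0 w ↔ w = u) (M : V → Finset ℕ) :
    colCount G M =
      ∑ γ' ∈ (Fintype.piFinset (fun w : {w : V // w ≠ v0} => M w.val)).filter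
          (fun γ' => ∀ v w, (G.comap (Subtype.val : {w : V // w ≠ v0} → V)).Adj v w →
            γ' v ≠ γ' w),
        ((M v0).erase (γ' ⟨u, hu⟩)).card := by
  unfold colCount
  rw [Finset.card_eq_sum_card_fiberwise
    (f := fun (γ : V → ℕ) (w : {w : V // w ≠ v0}) => γ w.val)
    (t := (Fintype.piFinset (fun w : {w : V // w ≠ v0} => M w.val)).filter
      (fun γ' => ∀ v w, (G.comap (Subtype.val : {w : V // w ≠ v0} → V)).Adj v w →
        γ' v ≠ γ' w))]
  · apply Finset.sum_congr rfl
    intro γ' hγ'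
    simp only [Finset.mem_filter, Fintype.mem_piFinset] at hγ'
    apply Finset.card_bij' (i := fun γ _ => γ v0)
      (j := fun c _ => fun w => if h : w = v0 then c else γ' ⟨w, h⟩)
    · intro γ hγ
      simp only [Finset.mem_filter, Fintype.mem_piFinset] at hγ
      obtain ⟨⟨hmem, hprop⟩, hres⟩ := hγ
      rw [Finset.mem_erase]
      refine ⟨?_, hmem v0⟩
      have hadj : G.Adj v0 u := (hvu u).mpr rfl
      have h2 := hprop v0 u hadj
      exact fun h => h2 (h.trans (congrFun hres ⟨u, hu⟩).symm)
    · intro c hc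
      rw [Finset.mem_erase] at hc
      simp only [Finset.mem_filter, Fintype.mem_piFinset]
      refine ⟨⟨?_, ?_⟩, ?_⟩
      · intro w
        by_cases h : (w : V) = v0
        · simp only [dif_pos h]; exact h ▸ hc.2
        · simp only [dif_neg h]; exact hγ'.1 ⟨w, h⟩
      · intro v w hadj
        show (if h : v = v0 then c else γ' ⟨v, h⟩) ≠ (if h : w = v0 then c else γ' ⟨w, h⟩)
        by_cases hv : v = v0
        · have hw : w = u := (hvu w).mp (hv ▸ hadj)
          have hw0 : w ≠ v0 := hw ▸ hu
          rw [dif_pos hv, dif_neg hw0]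
          have he : (⟨w, hw0⟩ : {x : V // x ≠ v0}) = ⟨u, hu⟩ := Subtype.ext hw
          rw [he]
          exact hc.1
        · by_cases hw : w = v0
          · have hv' : v = u := (hvu v).mp (hw ▸ hadj.symm)
            rw [dif_neg hv, dif_pos hw]
            have he : (⟨v, hv⟩ : {x : V // x ≠ v0}) = ⟨u, hu⟩ := Subtype.ext hv'
            rw [he]
            exact fun h => hc.1 h.symm
          · rw [dif_neg hv, dif_neg hw]
            exact hγ'.2 ⟨v, hv⟩ ⟨w, hw⟩ hadj
      · funext w
        simp [w.2]
    · intro γ hγ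
      simp only [Finset.mem_filter] at hγ
      funext w
      by_cases h : w = v0
      · subst h; simp
      · simp only [dif_neg h]
        exact (congrFun hγ.2 ⟨w, h⟩).symm
    · intro c hc
      simp
  · intro γ hγ
    simp only [Finset.mem_coe, Finset.mem_filter, Fintype.mem_piFinset] at hγ ⊢
    obtain ⟨hmem, hprop⟩ := hγ
    exact ⟨fun w => hmem w.val, fun v w hadj => hprop v.val w.val hadj⟩

/-- A finite tree with at least two vertices has a leaf. -/
lemma exists_leaf (G : SimpleGraph V) (hG : G.IsTree) (h2 : 2 ≤ Fintype.card V) :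
    ∃ v0 u : V, u ≠ v0 ∧ ∀ w, G.Adj v0 w ↔ w = u := by
  haveI : DecidableEq V := Classical.decEq V
  haveI : DecidableRel G.Adj := Classical.decRel _
  have hdeg : ∀ v : V, 1 ≤ G.degree v := by
    intro v
    obtain ⟨w, hw⟩ := Fintype.exists_ne_of_one_lt_card (by omega) v
    have hr : G.Reachable v w := (hG.isConnected.preconnected v w).symm.symm
    obtain ⟨p⟩ := hr
    cases p with
    | nil => exact absurd rfl hw.symm
    | cons h q => exact (G.degree_pos_iff_exists_adj v).mpr ⟨_, h⟩
  have hsum : ∑ v, G.degree v = 2 * (Fintype.card V - 1) := by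
    have he : G.edgeFinset.card + 1 = Fintype.card V := hG.card_edgeFinset
    rw [SimpleGraph.sum_degrees_eq_twice_card_edges]
    omega
  have hone : ∃ v0, G.degree v0 = 1 := by
    by_contra hno
    push_neg at hno
    have h2d : ∀ v, 2 ≤ G.degree v := by
      intro v
      have h1 := hdeg v
      have h2 := hno v
      omega
    have hge : 2 * Fintype.card V ≤ ∑ v, G.degree v := by
      calc 2 * Fintype.card V = ∑ _v : V, 2 := by
            rw [Finset.sum_const, Finset.card_univ, smul_eq_mul, mul_comm]
        _ ≤ ∑ v, G.degree v := Finset.sum_le_sum (fun v _ => h2d v)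
    omega
  obtain ⟨v0, hd⟩ := hone
  have hcard1 : (G.neighborFinset v0).card = 1 := hd
  obtain ⟨u, hu⟩ := Finset.card_eq_one.mp hcard1
  have hvu : ∀ w, G.Adj v0 w ↔ w = u := by
    intro w
    rw [← SimpleGraph.mem_neighborFinset, hu, Finset.mem_singleton]
  exact ⟨v0, u, ((hvu u).mpr rfl).ne', hvu⟩

/-- Deleting a leaf from a tree gives a tree. -/
lemma isTree_comap (G : SimpleGraph V) (hG : G.IsTree) (v0 u : V)
    (hvu : ∀ w, G.Adj v0 w ↔ w = u) (h2 : 2 ≤ Fintype.card V) :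
    (G.comap (Subtype.val : {w : V // w ≠ v0} → V)).IsTree := by
  haveI hne : Nonempty {w : V // w ≠ v0} := by
    obtain ⟨w, hw⟩ := Fintype.exists_ne_of_one_lt_card (by omega) v0
    exact ⟨⟨w, hw⟩⟩
  constructor
  · -- connected
    apply SimpleGraph.Connected.mk
    intro x y
    obtain ⟨x, hx⟩ := x
    obtain ⟨y, hy⟩ := y
    have hr : G.Reachable x y := hG.isConnected.preconnected x y
    let p : G.Path x y := hr.some.toPath
    have hv : v0 ∉ (p : G.Walk x y).support := by
      intro hv
      have hp : (p : G.Walk x y).IsPath := p.2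
      set q := (p : G.Walk x y).takeUntil v0 hv with hq
      set r := (p : G.Walk x y).dropUntil v0 hv with hr'
      have nq : ¬ q.reverse.Nil := SimpleGraph.Walk.not_nil_of_ne (fun h => hx h.symm)
      have nr : ¬ r.Nil := SimpleGraph.Walk.not_nil_of_ne (Ne.symm hy)
      have hadja : G.Adj v0 (q.reverse.getVert 1) := q.reverse.adj_snd nq
      have hadjb : G.Adj v0 (r.getVert 1) := r.adj_snd nr
      have hau : q.reverse.getVert 1 = u := (hvu _).mp hadja
      have hbu : r.getVert 1 = u := (hvu _).mp hadjb
      have hamem : u ∈ q.support := by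
        rw [← hau]
        have := q.reverse.tail.start_mem_support
        have h1 : q.reverse.getVert 1 ∈ q.reverse.support := by
          rw [← SimpleGraph.Walk.cons_support_tail (p := q.reverse) nq]
          exact List.mem_cons_of_mem _ this
        rwa [SimpleGraph.Walk.support_reverse, List.mem_reverse] at h1
      have hbmem : u ∈ r.support.tail := by
        rw [← hbu]
        have := r.tail.start_mem_support
        rw [← SimpleGraph.Walk.cons_support_tail (p := r) nr]
        exact this
      have hnodup := hp.support_nodup
      rw [← SimpleGraph.Walk.take_spec (p : G.Walk x y) hv,
        SimpleGraph.Walk.support_append] at hnodup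
      exact (List.disjoint_of_nodup_append hnodup) hamem hbmem
    exact reachable_comap G v0 (p : G.Walk x y) hv hx hy
  · -- acyclic
    intro v c hc
    have f : (G.comap (Subtype.val : {w : V // w ≠ v0} → V)) ↪g G :=
      SimpleGraph.Embedding.comap (Function.Embedding.subtype _) G
    exact hG.IsAcyclic (c.map f.toHom) (hc.map f.injective)

universe u

lemma tree_mono_aux : ∀ (N : ℕ) (V : Type u) [Fintype V] (G : SimpleGraph V),
    Fintype.card V = N → G.IsTree → ∀ n : ℕ, 1 ≤ n → ∀ L : V → Finset ℕ,
    (∀ v, (L v).card = n) →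
    colCount G (fun _ => Finset.Icc 1 n) ≤ colCount G L := by
  intro N
  induction N using Nat.strong_induction_on with
  | _ N IH =>
    intro V _ G hcard hG n hn L hL
    by_cases hsmall : Fintype.card V ≤ 1
    · rw [colCount_of_subsingleton G hsmall, colCount_of_subsingleton G hsmall]
      apply le_of_eq
      apply Finset.prod_congr rfl
      intro v _
      rw [hL v, Nat.card_Icc]
      omega
    · push_neg at hsmall
      obtain ⟨v0, u, hu, hvu⟩ := exists_leaf G hG hsmall
      set G' := G.comap (Subtype.val : {w : V // w ≠ v0} → V) with hG'def
      have hG' : G'.IsTree := isTree_comap G hG v0 u hvu hsmall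
      have hcard' : Fintype.card {w : V // w ≠ v0} = N - 1 := by
        have : Fintype.card {w : V // w ≠ v0} = Fintype.card V - 1 := by
          simp [Fintype.card_subtype_compl]
        omega
      have hIH := IH (N - 1) (by omega) {w : V // w ≠ v0} G' hcard' hG' n hn
        (fun w => L w.val) (fun w => hL w.val)
      rw [colCount_eq_sum G v0 u hu hvu L,
        colCount_eq_sum G v0 u hu hvu (fun _ => Finset.Icc 1 n)]
      have hSc : colCount G' (fun _ => Finset.Icc 1 n) =
          ((Fintype.piFinset (fun w : {w : V // w ≠ v0} =>
            (fun _ : V => Finset.Icc 1 n) w.val)).filter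
            (fun γ' => ∀ v w, G'.Adj v w → γ' v ≠ γ' w)).card := by unfold colCount; congr!
      have hSL : colCount G' (fun w => L w.val) =
          ((Fintype.piFinset (fun w : {w : V // w ≠ v0} => L w.val)).filter
            (fun γ' => ∀ v w, G'.Adj v w → γ' v ≠ γ' w)).card := by unfold colCount; congr!
      calc ∑ γ' ∈ (Fintype.piFinset (fun w : {w : V // w ≠ v0} =>
              (fun _ : V => Finset.Icc 1 n) w.val)).filter
              (fun γ' => ∀ v w, G'.Adj v w → γ' v ≠ γ' w),
            (((fun _ : V => Finset.Icc 1 n) v0).erase (γ' ⟨u, hu⟩)).card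
          = ∑ _γ' ∈ (Fintype.piFinset (fun w : {w : V // w ≠ v0} =>
              (fun _ : V => Finset.Icc 1 n) w.val)).filter
              (fun γ' => ∀ v w, G'.Adj v w → γ' v ≠ γ' w), (n - 1) := by
            apply Finset.sum_congr rfl
            intro γ' hγ'
            simp only [Finset.mem_filter, Fintype.mem_piFinset] at hγ'
            have hmem : γ' ⟨u, hu⟩ ∈ Finset.Icc 1 n := hγ'.1 ⟨u, hu⟩
            show ((Finset.Icc 1 n).erase (γ' ⟨u, hu⟩)).card = n - 1
            have h3 := Finset.card_erase_of_mem hmem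
            rw [Nat.card_Icc] at h3
            rw [h3]
            exact rfl
        _ = (n - 1) * colCount G' (fun _ => Finset.Icc 1 n) := by
            rw [Finset.sum_const, smul_eq_mul, hSc, mul_comm]
        _ ≤ (n - 1) * colCount G' (fun w => L w.val) :=
            Nat.mul_le_mul_left _ hIH
        _ = ∑ _γ' ∈ (Fintype.piFinset (fun w : {w : V // w ≠ v0} => L w.val)).filter
              (fun γ' => ∀ v w, G'.Adj v w → γ' v ≠ γ' w), (n - 1) := by
            rw [Finset.sum_const, smul_eq_mul, hSL, mul_comm]
        _ ≤ ∑ γ' ∈ (Fintype.piFinset (fun w : {w : V // w ≠ v0} => L w.val)).filter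
              (fun γ' => ∀ v w, G'.Adj v w → γ' v ≠ γ' w),
            ((L v0).erase (γ' ⟨u, hu⟩)).card := by
            apply Finset.sum_le_sum
            intro γ' _
            have := Finset.pred_card_le_card_erase (s := L v0) (a := γ' ⟨u, hu⟩)
            rw [hL v0] at this
            exact this

end Aux

theorem stmt2 {V : Type*} [Fintype V] (G : SimpleGraph V) (hG : G.IsTree)
    (n : ℕ) (hn : 1 ≤ n) : Monophilic G n := by
  intro L hL
  exact tree_mono_aux (Fintype.card V) V G rfl hG n hn L hL
end

section
/- Let G be a graph that is the disjoint union of subgraphs G_1 and G_2 together with one edge v_1v_2 where v_i ∈ G_i. Let L be a list assignment for G. Then there exists a list assignment L' with |L'(v)| = |L(v)| for every v, such that L'(v_1) ⊆ L'(v_2) or L'(v_2) ⊆ L'(v_1), and col(G,L') ≤ col(G,L). -/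
open SimpleGraph

/-- Recoloring one side of a bridge by an involution `σ` that fixes colors common to
the two bridge-endpoint lists does not increase the number of list colorings. -/
lemma recolor_le {V : Type*} [Fintype V] (G : SimpleGraph V)
    (L L' : V → Finset ℕ) (P : V → Prop) (u w : V)
    (hcross : ∀ a b, ¬ P a → P b → G.Adj a b → a = u ∧ b = w)
    (σ : ℕ → ℕ) (hinv : ∀ x, σ (σ x) = x)
    (hσ : ∀ x ∈ L w, x ∈ L u → σ x = x)
    (h1 : ∀ v, P v → L' v = (L v).image σ)
    (h2 : ∀ v, ¬ P v → L' v = L v) :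
    colCount G L' ≤ colCount G L := by
  classical
  have hσinj : Function.Injective σ := Function.LeftInverse.injective hinv
  unfold colCount
  apply Finset.card_le_card_of_injOn (fun γ v => if P v then σ (γ v) else γ v)
  · intro γ hγ
    simp only [Finset.mem_coe, Finset.mem_filter, Fintype.mem_piFinset] at hγ ⊢
    obtain ⟨hmem, hprop⟩ := hγ
    -- membership facts
    have hmemP : ∀ v, P v → σ (γ v) ∈ L v := by
      intro v hv
      have := hmem v
      rw [h1 v hv, Finset.mem_image] at this
      obtain ⟨x, hx, hxe⟩ := this
      rw [← hxe, hinv]; exact hx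
    have hmemN : ∀ v, ¬ P v → γ v ∈ L v := by
      intro v hv
      have := hmem v
      rwa [h2 v hv] at this
    constructor
    · intro v
      by_cases hv : P v
      · simp only [hv, if_true]; exact hmemP v hv
      · simp only [hv, if_false]; exact hmemN v hv
    · -- key fact for the cross edge
      have key : ∀ a b, G.Adj a b → ¬ P a → P b → γ a ≠ σ (γ b) := by
        intro a b hab hpa hpb
        obtain ⟨hau, hbw⟩ := hcross a b hpa hpb hab
        subst hau; subst hbw
        have hγu : γ a ∈ L a := hmemN a hpa
        have hγw : σ (γ b) ∈ L b := hmemP b hpb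
        by_cases hw' : σ (γ b) ∈ L a
        · have heq : γ b = σ (γ b) := by
            have h' := hσ _ hγw hw'
            rwa [hinv] at h'
          rw [← heq]
          exact hprop a b hab
        · intro h; exact hw' (h ▸ hγu)
      intro a b hab
      by_cases ha : P a <;> by_cases hb : P b
      · simp only [ha, hb, if_true]
        exact fun h => hprop a b hab (hσinj h)
      · simp only [ha, hb, if_true, if_false]
        exact (key b a hab.symm hb ha).symm
      · simp only [ha, hb, if_true, if_false]
        exact key a b hab ha hb
      · simp only [ha, hb, if_false]
        exact hprop a b hab
  · intro γ hγ γ' hγ' h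
    funext v
    have hv := congrFun h v
    by_cases hPv : P v
    · simp only [hPv, if_true] at hv
      exact hσinj hv
    · simpa [hPv] using hv

/-- Given finsets `A B` with `|B \ A| ≤ |A \ B|`, there is an involution of `ℕ` fixing
`A ∩ B` pointwise and mapping `B` into `A`. -/
lemma exists_invol (A B : Finset ℕ) (hc : (B \ A).card ≤ (A \ B).card) :
    ∃ σ : ℕ → ℕ, (∀ x, σ (σ x) = x) ∧ (∀ x ∈ B, x ∈ A → σ x = x) ∧
      B.image σ ⊆ A := by
  classical
  obtain ⟨T, hTsub, hTcard⟩ := Finset.exists_subset_card_eq hc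
  have e : {x // x ∈ B \ A} ≃ {x // x ∈ T} := Finset.equivOfCardEq hTcard.symm
  set σ : ℕ → ℕ := fun x =>
    if h : x ∈ B \ A then (e ⟨x, h⟩ : ℕ)
    else if h : x ∈ T then (e.symm ⟨x, h⟩ : ℕ) else x with hσdef
  have hdisj : ∀ x ∈ T, x ∉ B \ A := by
    intro x hx hx'
    have := hTsub hx
    simp only [Finset.mem_sdiff] at this hx'
    exact hx'.2 this.1
  have hval1 : ∀ (x) (h : x ∈ B \ A), σ x = (e ⟨x, h⟩ : ℕ) := by
    intro x h; simp only [hσdef, dif_pos h]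
  have hval2 : ∀ (x) (h : x ∈ T), σ x = (e.symm ⟨x, h⟩ : ℕ) := by
    intro x h
    simp only [hσdef, dif_neg (hdisj x h), dif_pos h]
  have hval3 : ∀ x, x ∉ B \ A → x ∉ T → σ x = x := by
    intro x h1 h2; simp only [hσdef, dif_neg h1, dif_neg h2]
  refine ⟨σ, ?_, ?_, ?_⟩
  · intro x
    by_cases h : x ∈ B \ A
    · rw [hval1 x h]
      have hm : (e ⟨x, h⟩ : ℕ) ∈ T := (e ⟨x, h⟩).2
      rw [hval2 _ hm]
      have : e.symm ⟨(e ⟨x, h⟩ : ℕ), hm⟩ = e.symm (e ⟨x, h⟩) := by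
        congr 1
      rw [this, Equiv.symm_apply_apply]
    · by_cases h' : x ∈ T
      · rw [hval2 x h']
        have hm : (e.symm ⟨x, h'⟩ : ℕ) ∈ B \ A := (e.symm ⟨x, h'⟩).2
        rw [hval1 _ hm]
        have : e ⟨(e.symm ⟨x, h'⟩ : ℕ), hm⟩ = e (e.symm ⟨x, h'⟩) := by
          congr 1
        rw [this, Equiv.apply_symm_apply]
      · rw [hval3 x h h', hval3 x h h']
  · intro x hxB hxA
    have h1 : x ∉ B \ A := by simp [Finset.mem_sdiff, hxA]
    have h2 : x ∉ T := by
      intro hx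
      have := hTsub hx
      simp only [Finset.mem_sdiff] at this
      exact this.2 hxB
    exact hval3 x h1 h2
  · intro y hy
    simp only [Finset.mem_image] at hy
    obtain ⟨x, hxB, hxe⟩ := hy
    by_cases hxA : x ∈ A
    · rw [← hxe]
      have h1 : x ∉ B \ A := by simp [Finset.mem_sdiff, hxA]
      have h2 : x ∉ T := by
        intro hx
        have := hTsub hx
        simp only [Finset.mem_sdiff] at this
        exact this.2 hxB
      rw [hval3 x h1 h2]; exact hxA
    · have h : x ∈ B \ A := Finset.mem_sdiff.mpr ⟨hxB, hxA⟩
      rw [← hxe, hval1 x h]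
      have hm : (e ⟨x, h⟩ : ℕ) ∈ T := (e ⟨x, h⟩).2
      exact (Finset.mem_sdiff.mp (hTsub hm)).1

theorem stmt3 {V₁ V₂ : Type*} [Fintype V₁] [Fintype V₂]
    (G₁ : SimpleGraph V₁) (G₂ : SimpleGraph V₂) (v₁ : V₁) (v₂ : V₂)
    (G : SimpleGraph (V₁ ⊕ V₂))
    (h₁ : ∀ a b : V₁, G.Adj (.inl a) (.inl b) ↔ G₁.Adj a b)
    (h₂ : ∀ a b : V₂, G.Adj (.inr a) (.inr b) ↔ G₂.Adj a b)
    (hbridge : ∀ (a : V₁) (b : V₂), G.Adj (.inl a) (.inr b) ↔ a = v₁ ∧ b = v₂)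
    (L : V₁ ⊕ V₂ → Finset ℕ) :
    ∃ L' : V₁ ⊕ V₂ → Finset ℕ,
      (∀ v, (L' v).card = (L v).card) ∧
      (L' (.inl v₁) ⊆ L' (.inr v₂) ∨ L' (.inr v₂) ⊆ L' (.inl v₁)) ∧
      colCount G L' ≤ colCount G L := by
  classical
  set A := L (.inl v₁) with hA
  set B := L (.inr v₂) with hB
  by_cases hc : (B \ A).card ≤ (A \ B).card
  · -- recolor the right side; new right list ⊆ left list
    obtain ⟨σ, hinv, hσ, hsub⟩ := exists_invol A B hc
    have hσinj : Function.Injective σ := Function.LeftInverse.injective hinv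
    refine ⟨Sum.elim (fun a => L (.inl a)) (fun b => (L (.inr b)).image σ), ?_, ?_, ?_⟩
    · intro v
      rcases v with a | b
      · rfl
      · exact Finset.card_image_of_injective _ hσinj
    · right
      simpa using hsub
    · apply recolor_le G L _ (fun v => v.isRight = true) (.inl v₁) (.inr v₂)
        ?_ σ hinv hσ ?_ ?_
      · intro a b hpa hpb hadj
        rcases a with a | a
        · rcases b with b | b
          · simp at hpb
          · obtain ⟨h1', h2'⟩ := (hbridge a b).mp hadj
            exact ⟨by rw [h1'], by rw [h2']⟩
        · simp at hpa
      · intro v hv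
        rcases v with a | b
        · simp at hv
        · rfl
      · intro v hv
        rcases v with a | b
        · rfl
        · simp at hv
  · -- recolor the left side; new left list ⊆ right list
    have hc' : (A \ B).card ≤ (B \ A).card := le_of_not_ge hc
    obtain ⟨σ, hinv, hσ, hsub⟩ := exists_invol B A hc'
    have hσinj : Function.Injective σ := Function.LeftInverse.injective hinv
    refine ⟨Sum.elim (fun a => (L (.inl a)).image σ) (fun b => L (.inr b)), ?_, ?_, ?_⟩
    · intro v
      rcases v with a | b
      · exact Finset.card_image_of_injective _ hσinj
      · rfl
    · left
      simpa using hsub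
    · apply recolor_le G L _ (fun v => v.isLeft = true) (.inr v₂) (.inl v₁)
        ?_ σ hinv hσ ?_ ?_
      · intro a b hpa hpb hadj
        rcases a with a | a
        · simp at hpa
        · rcases b with b | b
          · obtain ⟨h1', h2'⟩ := (hbridge b a).mp hadj.symm
            exact ⟨by rw [h2'], by rw [h1']⟩
          · simp at hpb
      · intro v hv
        rcases v with a | b
        · rfl
        · simp at hv
      · intro v hv
        rcases v with a | b
        · simp at hv
        · rfl
end

section
/- Let n ≥ 2 and let P be a path of length k ≥ 1. Let A_k denote the number of proper colorings of P when both terminal vertices receive the same fixed (n−1)-element list S and all interior vertices receive a fixed n-element list containing S. Then A_k satisfies the recursion A_k = (n−1)·B_{k−1}, where B_{k-1} is the corresponding count when the two terminal (n−1)-lists are distinct subsets of the common interior n-list. -/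
open SimpleGraph

/-- A type A `(n,n-1)`-list assignment for the path with `k+1` vertices: all interior
vertices share a common `n`-list `T`, and both terminal vertices get the same
`(n-1)`-subset `S` of `T`. -/
def IsTypeA (n k : ℕ) (L : Fin (k + 1) → Finset ℕ) : Prop :=
  ∃ S T : Finset ℕ, S.card = n - 1 ∧ T.card = n ∧ S ⊆ T ∧
    L 0 = S ∧ L (Fin.last k) = S ∧
    ∀ i : Fin (k + 1), i ≠ 0 → i ≠ Fin.last k → L i = T

/-- A type B `(n,n-1)`-list assignment: as in type A, but the two terminal
`(n-1)`-lists are distinct subsets of the common interior `n`-list. -/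
def IsTypeB (n k : ℕ) (L : Fin (k + 1) → Finset ℕ) : Prop :=
  ∃ S₁ S₂ T : Finset ℕ, S₁.card = n - 1 ∧ S₂.card = n - 1 ∧ T.card = n ∧
    S₁ ⊆ T ∧ S₂ ⊆ T ∧ S₁ ≠ S₂ ∧
    L 0 = S₁ ∧ L (Fin.last k) = S₂ ∧
    ∀ i : Fin (k + 1), i ≠ 0 → i ≠ Fin.last k → L i = T

lemma eq_erase_of_subset {S T : Finset ℕ} (hST : S ⊆ T) (h : S.card + 1 = T.card) :
    ∃ a ∈ T, a ∉ S ∧ S = T.erase a := by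
  have h1 : (T \ S).card = 1 := by rw [Finset.card_sdiff_of_subset hST]; omega
  obtain ⟨a, ha⟩ := Finset.card_eq_one.mp h1
  have haT : a ∈ T ∧ a ∉ S := by
    have := ha ▸ Finset.mem_singleton_self a
    exact Finset.mem_sdiff.mp this
  refine ⟨a, haT.1, haT.2, ?_⟩
  ext x
  simp only [Finset.mem_erase]
  constructor
  · intro hx
    exact ⟨fun hxa => haT.2 (hxa ▸ hx), hST hx⟩
  · rintro ⟨hxa, hxT⟩
    by_contra hxS
    have : x ∈ T \ S := Finset.mem_sdiff.mpr ⟨hxT, hxS⟩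
    rw [ha, Finset.mem_singleton] at this
    exact hxa this


lemma exists_good_bij (T T' : Finset ℕ) (hcard : T.card = T'.card)
    (s a : ℕ) (hs : s ∈ T) (ha : a ∈ T) (hsa : s ≠ a)
    (b c : ℕ) (hb : b ∈ T') (hc : c ∈ T') (hbc : b ≠ c) :
    ∃ φ ψ : ℕ → ℕ, φ s = b ∧ φ a = c ∧ (∀ x ∈ T, φ x ∈ T') ∧
      (∀ x ∈ T, ψ (φ x) = x) ∧ (∀ y ∈ T', ψ y ∈ T) ∧ (∀ y ∈ T', φ (ψ y) = y) := by
  have hc2 : ((T.erase s).erase a).card = ((T'.erase b).erase c).card := by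
    rw [Finset.card_erase_of_mem (Finset.mem_erase.mpr ⟨Ne.symm hsa, ha⟩),
        Finset.card_erase_of_mem hs,
        Finset.card_erase_of_mem (Finset.mem_erase.mpr ⟨Ne.symm hbc, hc⟩),
        Finset.card_erase_of_mem hb, hcard]
  classical
  set e := Finset.equivOfCardEq hc2 with he
  have hemem : ∀ z : {x // x ∈ (T.erase s).erase a}, (e z : ℕ) ∈ (T'.erase b).erase c :=
    fun z => (e z).2
  have hemem' : ∀ z : {y // y ∈ (T'.erase b).erase c}, (e.symm z : ℕ) ∈ (T.erase s).erase a :=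
    fun z => (e.symm z).2
  refine ⟨fun x => if x = s then b else if x = a then c else
      if h : x ∈ (T.erase s).erase a then (e ⟨x, h⟩ : ℕ) else x,
    fun y => if y = b then s else if y = c then a else
      if h : y ∈ (T'.erase b).erase c then (e.symm ⟨y, h⟩ : ℕ) else y, ?_, ?_, ?_, ?_, ?_, ?_⟩
  · simp
  · dsimp only
    rw [if_neg (Ne.symm hsa), if_pos rfl]
  · intro x hx
    dsimp only
    by_cases h1 : x = s
    · simpa [h1] using hb
    by_cases h2 : x = a
    · simp only [if_neg h1, if_pos h2]; exact hc
    have hmem : x ∈ (T.erase s).erase a := by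
      exact Finset.mem_erase.mpr ⟨h2, Finset.mem_erase.mpr ⟨h1, hx⟩⟩
    simp only [if_neg h1, if_neg h2, dif_pos hmem]
    exact Finset.mem_of_mem_erase (Finset.mem_of_mem_erase (hemem ⟨x, hmem⟩))
  · intro x hx
    dsimp only
    by_cases h1 : x = s
    · simp [h1]
    by_cases h2 : x = a
    · simp only [if_neg h1, if_pos h2, if_neg (Ne.symm hbc), if_pos rfl]; exact h2.symm
    have hmem : x ∈ (T.erase s).erase a :=
      Finset.mem_erase.mpr ⟨h2, Finset.mem_erase.mpr ⟨h1, hx⟩⟩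
    simp only [if_neg h1, if_neg h2, dif_pos hmem]
    have h3 := hemem ⟨x, hmem⟩
    have hnb : (e ⟨x, hmem⟩ : ℕ) ≠ b := Finset.ne_of_mem_erase (Finset.mem_of_mem_erase h3)
    have hnc : (e ⟨x, hmem⟩ : ℕ) ≠ c := Finset.ne_of_mem_erase h3
    rw [if_neg hnb, if_neg hnc, dif_pos h3]
    have : (⟨(e ⟨x, hmem⟩ : ℕ), h3⟩ : {y // y ∈ (T'.erase b).erase c}) = e ⟨x, hmem⟩ :=
      Subtype.ext rfl
    rw [this, Equiv.symm_apply_apply]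
  · intro y hy
    dsimp only
    by_cases h1 : y = b
    · simpa [h1] using hs
    by_cases h2 : y = c
    · simp only [if_neg h1, if_pos h2]; exact ha
    have hmem : y ∈ (T'.erase b).erase c :=
      Finset.mem_erase.mpr ⟨h2, Finset.mem_erase.mpr ⟨h1, hy⟩⟩
    simp only [if_neg h1, if_neg h2, dif_pos hmem]
    exact Finset.mem_of_mem_erase (Finset.mem_of_mem_erase (hemem' ⟨y, hmem⟩))
  · intro y hy
    dsimp only
    by_cases h1 : y = b
    · simp [h1]
    by_cases h2 : y = c
    · simp only [if_neg h1, if_pos h2, if_neg (Ne.symm hsa), if_pos rfl]; exact h2.symm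
    have hmem : y ∈ (T'.erase b).erase c :=
      Finset.mem_erase.mpr ⟨h2, Finset.mem_erase.mpr ⟨h1, hy⟩⟩
    simp only [if_neg h1, if_neg h2, dif_pos hmem]
    have h3 := hemem' ⟨y, hmem⟩
    have hns : (e.symm ⟨y, hmem⟩ : ℕ) ≠ s := Finset.ne_of_mem_erase (Finset.mem_of_mem_erase h3)
    have hna : (e.symm ⟨y, hmem⟩ : ℕ) ≠ a := Finset.ne_of_mem_erase h3
    rw [if_neg hns, if_neg hna, dif_pos h3]
    have : (⟨(e.symm ⟨y, hmem⟩ : ℕ), h3⟩ : {x // x ∈ (T.erase s).erase a}) = e.symm ⟨y, hmem⟩ :=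
      Subtype.ext rfl
    rw [this, Equiv.apply_symm_apply]
theorem stmt4 (n k : ℕ) (hn : 2 ≤ n) (hk : 1 ≤ k)
    (L : Fin (k + 1) → Finset ℕ) (hL : IsTypeA n k L)
    (L' : Fin ((k - 1) + 1) → Finset ℕ) (hL' : IsTypeB n (k - 1) L') :
    colCount (pathGraph (k + 1)) L = (n - 1) * colCount (pathGraph ((k - 1) + 1)) L' := by
  obtain ⟨m, rfl⟩ : ∃ m, k = m + 1 := ⟨k - 1, (Nat.succ_pred_eq_of_pos hk).symm⟩
  obtain ⟨S, T, hScard, hTcard, hST, hL0, hLlast, hLint⟩ := hL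
  obtain ⟨S₁, S₂, T', h1c, h2c, hT'c, h1T, h2T, h12, hM0x, hMlastx, hMintx⟩ := hL'
  rcases Nat.eq_zero_or_pos m with rfl | hm
  · exact absurd (hM0x.symm.trans hMlastx) h12
  show colCount (pathGraph (m + 1 + 1)) L
      = (n - 1) * colCount (pathGraph (m + 1)) (fun j : Fin (m + 1) => L' j)
  set M : Fin (m + 1) → Finset ℕ := fun j : Fin (m + 1) => L' j with hMdef
  have hM0 : M 0 = S₁ := hM0x
  have hMlast : M (Fin.last m) = S₂ := hMlastx
  have hMint : ∀ j : Fin (m + 1), j ≠ 0 → j ≠ Fin.last m → M j = T' := hMintx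
  clear hM0x hMlastx hMintx
  obtain ⟨a, haT, haS, hSe⟩ := eq_erase_of_subset hST (by omega)
  obtain ⟨a₁, ha₁T, ha₁S, hS1e⟩ := eq_erase_of_subset h1T (by omega)
  obtain ⟨a₂, ha₂T, ha₂S, hS2e⟩ := eq_erase_of_subset h2T (by omega)
  have ha12 : a₁ ≠ a₂ := fun h => h12 (by rw [hS1e, hS2e, h])
  have hLsub : ∀ i, L i ⊆ T := by
    intro i
    by_cases h0 : i = 0
    · rw [h0, hL0]; exact hST
    by_cases hl : i = Fin.last (m + 1)
    · rw [hl, hLlast]; exact hST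
    · rw [hLint i h0 hl]
  have hMsub : ∀ j : Fin (m + 1), M j ⊆ T' := by
    intro j
    by_cases h0 : j = 0
    · rw [h0, hM0]; exact h1T
    by_cases hl : j = Fin.last m
    · rw [hl, hMlast]; exact h2T
    · rw [hMint j h0 hl]
  have hbij : ∀ s : ℕ, ∃ φ ψ : ℕ → ℕ, s ∈ S →
      (φ s = a₁ ∧ φ a = a₂ ∧ (∀ x ∈ T, φ x ∈ T') ∧ (∀ x ∈ T, ψ (φ x) = x) ∧
       (∀ y ∈ T', ψ y ∈ T) ∧ (∀ y ∈ T', φ (ψ y) = y)) := by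
    intro s
    by_cases hs : s ∈ S
    · obtain ⟨φ, ψ, h⟩ := exists_good_bij T T' (by rw [hTcard, hT'c]) s a (hST hs) haT
        (fun h => haS (h ▸ hs)) a₁ a₂ ha₁T ha₂T ha12
      exact ⟨φ, ψ, fun _ => h⟩
    · exact ⟨id, id, fun h => absurd h hs⟩
  choose φ ψ hφψ using hbij
  have adj01 : (pathGraph (m + 1 + 1)).Adj 0 (Fin.succ 0) := by
    rw [pathGraph_adj]; left; simp
  have adjsucc : ∀ v w : Fin (m + 1), (pathGraph (m + 1)).Adj v w →
      (pathGraph (m + 1 + 1)).Adj v.succ w.succ := by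
    intro v w h
    rw [pathGraph_adj] at h ⊢
    simp only [Fin.val_succ]
    omega
  unfold colCount
  rw [← hScard, ← Finset.card_product]
  apply Finset.card_nbij' (fun γ => (γ 0, fun j : Fin (m + 1) => φ (γ 0) (γ j.succ)))
    (fun p => Fin.cons p.1 (fun j => ψ p.1 (p.2 j)))
  · -- forward map lands in the target
    intro γ hγ
    simp only [Finset.mem_coe, Finset.mem_filter, Fintype.mem_piFinset] at hγ
    obtain ⟨hγmem, hγprop⟩ := hγ
    have hsS : γ 0 ∈ S := by rw [← hL0]; exact hγmem 0
    obtain ⟨hφs, hφa, hφT, hψφ, hψT, hφψ'⟩ := hφψ (γ 0) hsS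
    have hγT : ∀ i, γ i ∈ T := fun i => hLsub i (hγmem i)
    have hφne : ∀ x ∈ T, ∀ y ∈ T, x ≠ y → φ (γ 0) x ≠ φ (γ 0) y := by
      intro x hx y hy hxy h
      exact hxy (by rw [← hψφ x hx, h, hψφ y hy])
    simp only [Finset.mem_coe, Finset.mem_product, Finset.mem_filter, Fintype.mem_piFinset]
    refine ⟨hsS, ?_, ?_⟩
    · intro j
      by_cases hj0 : j = 0
      · subst hj0
        rw [hM0, hS1e]
        have h1 : φ (γ 0) (γ (Fin.succ 0)) ≠ φ (γ 0) (γ 0) :=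
          hφne _ (hγT _) _ (hγT 0) (Ne.symm (hγprop 0 _ adj01))
        exact Finset.mem_erase.mpr ⟨by rw [← hφs]; exact h1, hφT _ (hγT _)⟩
      by_cases hjl : j = Fin.last m
      · subst hjl
        rw [hMlast, hS2e]
        have hγl : γ (Fin.succ (Fin.last m)) ∈ T.erase a := by
          rw [← hSe, ← hLlast, ← Fin.succ_last]; exact hγmem _
        have h1 : φ (γ 0) (γ (Fin.succ (Fin.last m))) ≠ φ (γ 0) a :=
          hφne _ (hγT _) _ haT (Finset.ne_of_mem_erase hγl)
        exact Finset.mem_erase.mpr ⟨by rw [← hφa]; exact h1, hφT _ (hγT _)⟩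
      · rw [hMint j hj0 hjl]
        exact hφT _ (hγT _)
    · intro v w hadj
      exact hφne _ (hγT _) _ (hγT _) (hγprop _ _ (adjsucc v w hadj))
  · -- backward map lands in the source
    rintro ⟨s, δ⟩ hp
    simp only [Finset.mem_coe, Finset.mem_product, Finset.mem_filter, Fintype.mem_piFinset] at hp
    obtain ⟨hsS, hδmem, hδprop⟩ := hp
    obtain ⟨hφs, hφa, hφT, hψφ, hψT, hφψ'⟩ := hφψ s hsS
    have hδT' : ∀ j, δ j ∈ T' := fun j => hMsub j (hδmem j)
    have hψne : ∀ x ∈ T', ∀ y ∈ T', x ≠ y → ψ s x ≠ ψ s y := by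
      intro x hx y hy hxy h
      exact hxy (by rw [← hφψ' x hx, h, hφψ' y hy])
    have hψa₁ : ψ s a₁ = s := by rw [← hφs]; exact hψφ s (hST hsS)
    have hψa₂ : ψ s a₂ = a := by rw [← hφa]; exact hψφ a haT
    simp only [Finset.mem_coe, Finset.mem_filter, Fintype.mem_piFinset]
    refine ⟨?_, ?_⟩
    · intro i
      induction i using Fin.cases with
      | zero =>
        show (Fin.cons s (fun j => ψ s (δ j)) : Fin (m + 1 + 1) → ℕ) 0 ∈ L 0
        rw [Fin.cons_zero, hL0]; exact hsS
      | succ j =>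
        show (Fin.cons s (fun j => ψ s (δ j)) : Fin (m + 1 + 1) → ℕ) j.succ ∈ L j.succ
        rw [Fin.cons_succ]
        by_cases hjl : j = Fin.last m
        · subst hjl
          rw [Fin.succ_last, hLlast, hSe]
          refine Finset.mem_erase.mpr ⟨?_, hψT _ (hδT' _)⟩
          have hδl : δ (Fin.last m) ∈ T'.erase a₂ := by
            rw [← hS2e, ← hMlast]; exact hδmem _
          have h1 := hψne _ (hδT' _) a₂ ha₂T (Finset.ne_of_mem_erase hδl)
          rw [hψa₂] at h1
          exact h1
        · have hs0 : Fin.succ j ≠ 0 := Fin.succ_ne_zero j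
          have hsl : Fin.succ j ≠ Fin.last (m + 1) := by
            rw [← Fin.succ_last]
            exact fun h => hjl (Fin.succ_injective _ h)
          rw [hLint _ hs0 hsl]
          exact hψT _ (hδT' _)
    · have main : ∀ v w : Fin (m + 1 + 1), v.val + 1 = w.val →
          (Fin.cons s (fun j => ψ s (δ j)) : Fin (m + 1 + 1) → ℕ) v ≠
          (Fin.cons s (fun j => ψ s (δ j)) : Fin (m + 1 + 1) → ℕ) w := by
        intro v w hvw
        induction v using Fin.cases with
        | zero =>
          have hw0 : w ≠ 0 := by
            intro h; rw [h] at hvw; simp at hvw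
          obtain ⟨j, rfl⟩ := Fin.eq_succ_of_ne_zero hw0
          have hj0 : j = 0 := by
            rw [Fin.ext_iff]
            simp only [Fin.val_zero, Fin.val_succ] at hvw ⊢
            omega
          subst hj0
          rw [Fin.cons_zero, Fin.cons_succ]
          have hδ0 : δ 0 ∈ T'.erase a₁ := by rw [← hS1e, ← hM0]; exact hδmem 0
          have h1 := hψne a₁ ha₁T _ (hδT' 0) (Ne.symm (Finset.ne_of_mem_erase hδ0))
          rw [hψa₁] at h1
          exact h1
        | succ j =>
          have hw0 : w ≠ 0 := by
            intro h; rw [h] at hvw; simp [Fin.val_succ] at hvw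
          obtain ⟨j', rfl⟩ := Fin.eq_succ_of_ne_zero hw0
          rw [Fin.cons_succ, Fin.cons_succ]
          have hadj' : (pathGraph (m + 1)).Adj j j' := by
            rw [pathGraph_adj]
            left
            rw [Fin.val_succ, Fin.val_succ] at hvw
            omega
          exact hψne _ (hδT' j) _ (hδT' j') (hδprop j j' hadj')
      intro v w hadj
      rcases pathGraph_adj.mp hadj with h | h
      · exact main v w h
      · exact (main w v h).symm
  · -- left inverse
    intro γ hγ
    simp only [Finset.mem_coe, Finset.mem_filter, Fintype.mem_piFinset] at hγ
    obtain ⟨hγmem, -⟩ := hγ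
    have hsS : γ 0 ∈ S := by rw [← hL0]; exact hγmem 0
    obtain ⟨hφs, hφa, hφT, hψφ, hψT, hφψ'⟩ := hφψ (γ 0) hsS
    have hγT : ∀ i, γ i ∈ T := fun i => hLsub i (hγmem i)
    funext i
    induction i using Fin.cases with
    | zero =>
      show (Fin.cons (γ 0) (fun j => ψ (γ 0) (φ (γ 0) (γ j.succ))) : Fin (m + 1 + 1) → ℕ) 0 = γ 0
      rw [Fin.cons_zero]
    | succ j =>
      show (Fin.cons (γ 0) (fun j => ψ (γ 0) (φ (γ 0) (γ j.succ))) : Fin (m + 1 + 1) → ℕ) j.succ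
        = γ j.succ
      rw [Fin.cons_succ]
      exact hψφ _ (hγT _)
  · -- right inverse
    rintro ⟨s, δ⟩ hp
    simp only [Finset.mem_coe, Finset.mem_product, Finset.mem_filter, Fintype.mem_piFinset] at hp
    obtain ⟨hsS, hδmem, -⟩ := hp
    obtain ⟨hφs, hφa, hφT, hψφ, hψT, hφψ'⟩ := hφψ s hsS
    have hδT' : ∀ j, δ j ∈ T' := fun j => hMsub j (hδmem j)
    have h0 : (Fin.cons s (fun j => ψ s (δ j)) : Fin (m + 1 + 1) → ℕ) 0 = s := Fin.cons_zero _ _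
    refine Prod.ext h0 ?_
    funext j
    show φ ((Fin.cons s (fun j => ψ s (δ j)) : Fin (m + 1 + 1) → ℕ) 0)
        ((Fin.cons s (fun j => ψ s (δ j)) : Fin (m + 1 + 1) → ℕ) j.succ) = δ j
    rw [h0, Fin.cons_succ]
    exact hφψ' _ (hδT' j)
end

section
/- Let n ≥ 2 and k ≥ 1. With A_k and B_k the numbers of proper list-colorings of a path of length k under type A and type B (n,n−1)-list assignments respectively, one has A_k − B_k = (−1)^k. -/
open SimpleGraph

open Classical in
noncomputable def pcol (m : ℕ) (L : Fin (m + 1) → Finset ℕ) : Finset (Fin (m + 1) → ℕ) :=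
  (Fintype.piFinset L).filter fun γ => ∀ i : Fin m, γ i.castSucc ≠ γ i.succ

open Classical in
noncomputable def pcolc (m : ℕ) (L : Fin (m + 1) → Finset ℕ) (c : ℕ) :
    Finset (Fin (m + 1) → ℕ) :=
  (pcol m L).filter fun γ => γ (Fin.last m) = c

lemma mem_pcol {m : ℕ} {L : Fin (m + 1) → Finset ℕ} {γ : Fin (m + 1) → ℕ} :
    γ ∈ pcol m L ↔ (∀ i, γ i ∈ L i) ∧ ∀ i : Fin m, γ i.castSucc ≠ γ i.succ := by
  simp [pcol, Fintype.mem_piFinset]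

lemma mem_pcolc {m : ℕ} {L : Fin (m + 1) → Finset ℕ} {c : ℕ} {γ : Fin (m + 1) → ℕ} :
    γ ∈ pcolc m L c ↔
      ((∀ i, γ i ∈ L i) ∧ ∀ i : Fin m, γ i.castSucc ≠ γ i.succ) ∧ γ (Fin.last m) = c := by
  classical
  simp [pcolc, mem_pcol, Finset.mem_filter, and_assoc]

lemma colCount_path (m : ℕ) (L : Fin (m + 1) → Finset ℕ) :
    colCount (pathGraph (m + 1)) L = (pcol m L).card := by
  classical
  unfold colCount pcol
  congr 1
  ext γ
  simp only [Finset.mem_filter, Fintype.mem_piFinset]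
  constructor
  · rintro ⟨hmem, h⟩
    refine ⟨hmem, fun i => ?_⟩
    exact h _ _ (pathGraph_adj.mpr (Or.inl (by simp [Fin.val_succ])))
  · rintro ⟨hmem, h⟩
    refine ⟨hmem, fun v w hvw => ?_⟩
    rcases pathGraph_adj.mp hvw with hh | hh
    · have hv : v.val < m := by omega
      have := h ⟨v.val, hv⟩
      have e1 : (⟨v.val, hv⟩ : Fin m).castSucc = v := by ext; simp
      have e2 : (⟨v.val, hv⟩ : Fin m).succ = w := by ext; simp [Fin.val_succ]; omega
      rwa [e1, e2] at this
    · have hw : w.val < m := by omega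
      have := h ⟨w.val, hw⟩
      have e1 : (⟨w.val, hw⟩ : Fin m).castSucc = w := by ext; simp
      have e2 : (⟨w.val, hw⟩ : Fin m).succ = v := by ext; simp [Fin.val_succ]; omega
      rw [e1, e2] at this
      exact this.symm

lemma pcol_partition (m : ℕ) (L : Fin (m + 1) → Finset ℕ) :
    (pcol m L).card = ∑ c ∈ L (Fin.last m), (pcolc m L c).card := by
  classical
  unfold pcolc
  apply Finset.card_eq_sum_card_fiberwise
  intro γ hγ
  exact (mem_pcol.mp hγ).1 _

lemma pcolc_zero (L : Fin 1 → Finset ℕ) (c : ℕ) :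
    (pcolc 0 L c).card = if c ∈ L 0 then 1 else 0 := by
  classical
  split_ifs with h
  · rw [Finset.card_eq_one]
    refine ⟨fun _ => c, ?_⟩
    ext γ
    rw [mem_pcolc, Finset.mem_singleton]
    constructor
    · rintro ⟨⟨-, -⟩, hlast⟩
      funext i
      have : i = Fin.last 0 := Fin.ext (Nat.lt_one_iff.mp i.isLt)
      rw [this, hlast]
    · rintro rfl
      refine ⟨⟨fun i => ?_, fun i => i.elim0⟩, rfl⟩
      have : i = 0 := Fin.ext (Nat.lt_one_iff.mp i.isLt)
      rw [this]; exact h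
  · rw [Finset.card_eq_zero]
    ext γ
    simp only [mem_pcolc, Finset.notMem_empty, iff_false]
    rintro ⟨⟨hmem, -⟩, hlast⟩
    have : (0 : Fin 1) = Fin.last 0 := rfl
    exact h (by rw [this, ← hlast] at *; exact hmem _)

lemma pcolc_succ (m : ℕ) (L : Fin (m + 2) → Finset ℕ) (c : ℕ)
    (hc : c ∈ L (Fin.last (m + 1))) :
    (pcolc (m + 1) L c).card + (pcolc m (fun i => L i.castSucc) c).card
      = (pcol m (fun i => L i.castSucc)).card := by
  classical
  set L' : Fin (m + 1) → Finset ℕ := fun i => L i.castSucc with hL'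
  have key : (pcolc (m + 1) L c).card
      = ((pcol m L').filter fun γ => γ (Fin.last m) ≠ c).card := by
    apply Finset.card_bij' (fun γ _ => γ ∘ Fin.castSucc)
      (fun γ' _ => Fin.snoc γ' c)
    · intro γ hγ
      rw [mem_pcolc] at hγ
      obtain ⟨⟨hmem, hpath⟩, hlast⟩ := hγ
      rw [Finset.mem_filter, mem_pcol]
      refine ⟨⟨fun i => hmem _, fun i => ?_⟩, ?_⟩
      · have := hpath i.castSucc
        simpa [Fin.succ_castSucc, -Fin.castSucc_succ] using this
      · have := hpath (Fin.last m)
        rw [Fin.succ_last, hlast] at this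
        simpa using this
    · intro γ' hγ'
      rw [Finset.mem_filter, mem_pcol] at hγ'
      obtain ⟨⟨hmem, hpath⟩, hlast⟩ := hγ'
      rw [mem_pcolc]
      refine ⟨⟨fun i => ?_, fun i => ?_⟩, by simp⟩
      · induction i using Fin.lastCases with
        | last => simpa using hc
        | cast j => simpa using hmem j
      · induction i using Fin.lastCases with
        | last =>
          rw [Fin.succ_last]
          simpa using hlast
        | cast j =>
          rw [Fin.succ_castSucc]
          simpa [-Fin.castSucc_succ] using hpath j
    · intro γ hγ
      rw [mem_pcolc] at hγ
      funext i
      induction i using Fin.lastCases with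
      | last => simpa using hγ.2.symm
      | cast j => simp
    · intro γ' hγ'
      funext i
      simp
  rw [key]
  have h2 := Finset.card_filter_add_card_filter_not
    (s := pcol m L') (p := fun γ => γ (Fin.last m) = c)
  have h3 : pcolc m L' c = (pcol m L').filter fun γ => γ (Fin.last m) = c := rfl
  rw [h3]
  simp only [ne_eq] at h2 ⊢
  rw [Nat.add_comm]
  exact h2

def alph (n : ℕ) : ℕ → ℤ
  | 0 => 1
  | m + 1 => ((n : ℤ) - 1) * alph n m - (-1) ^ m

lemma q_of (n m : ℕ) (hn : 2 ≤ n) (S T : Finset ℕ)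
    (hS : S.card = n - 1) (hT : T.card = n) (hST : S ⊆ T)
    (L : Fin (m + 1) → Finset ℕ) (hL0 : L 0 = S)
    (hLi : ∀ i : Fin (m + 1), i ≠ 0 → L i = T)
    (h1 : ∀ s ∈ S, ((pcolc m L s).card : ℤ) = alph n m)
    (h2 : ∀ x ∈ T \ S, ((pcolc m L x).card : ℤ) = alph n m - (-1) ^ m) :
    ((pcol m L).card : ℤ) = n * alph n m - (-1) ^ m := by
  have hTS : (T \ S).card = 1 := by
    rw [Finset.card_sdiff_of_subset hST, hS, hT]; omega
  rw [pcol_partition]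
  push_cast
  cases m with
  | zero =>
    have hlast : L (Fin.last 0) = S := by rw [show (Fin.last 0) = 0 from rfl, hL0]
    rw [hlast, Finset.sum_congr rfl h1, Finset.sum_const, hS]
    simp only [alph, nsmul_eq_mul]
    have : ((n - 1 : ℕ) : ℤ) = (n : ℤ) - 1 := by
      have := hn; push_cast [Nat.cast_sub (by omega : 1 ≤ n)]; ring
    rw [this]; ring
  | succ j =>
    have hlast : L (Fin.last (j + 1)) = T := by
      apply hLi
      intro h
      have := congrArg Fin.val h
      simp [Fin.last] at this
    rw [hlast, ← Finset.sum_sdiff hST, Finset.sum_congr rfl h2, Finset.sum_congr rfl h1,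
      Finset.sum_const, Finset.sum_const, hTS, hS]
    simp only [nsmul_eq_mul, one_mul]
    have : ((n - 1 : ℕ) : ℤ) = (n : ℤ) - 1 := by
      push_cast [Nat.cast_sub (by omega : 1 ≤ n)]; ring
    rw [this]
    ring

lemma prefix_counts (n : ℕ) (hn : 2 ≤ n) (S T : Finset ℕ)
    (hS : S.card = n - 1) (hT : T.card = n) (hST : S ⊆ T) :
    ∀ (m : ℕ) (L : Fin (m + 1) → Finset ℕ), L 0 = S →
      (∀ i : Fin (m + 1), i ≠ 0 → L i = T) →
      (∀ s ∈ S, ((pcolc m L s).card : ℤ) = alph n m) ∧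
      (∀ x ∈ T \ S, ((pcolc m L x).card : ℤ) = alph n m - (-1) ^ m) := by
  intro m
  induction m with
  | zero =>
    intro L hL0 _
    constructor
    · intro s hs
      rw [pcolc_zero, hL0, if_pos hs]
      rfl
    · intro x hx
      rw [pcolc_zero, hL0, if_neg (Finset.mem_sdiff.mp hx).2]
      simp [alph]
  | succ j ih =>
    intro L hL0 hLi
    set L' : Fin (j + 1) → Finset ℕ := fun i => L i.castSucc with hL'def
    have hL'0 : L' 0 = S := by
      rw [hL'def]; simpa [Fin.castSucc_zero] using hL0
    have hL'i : ∀ i : Fin (j + 1), i ≠ 0 → L' i = T := by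
      intro i hi
      apply hLi
      simpa [Fin.castSucc_eq_zero_iff] using hi
    obtain ⟨ih1, ih2⟩ := ih L' hL'0 hL'i
    have hq := q_of n j hn S T hS hT hST L' hL'0 hL'i ih1 ih2
    have hlastT : L (Fin.last (j + 1)) = T := by
      apply hLi
      intro h
      have := congrArg Fin.val h
      simp [Fin.last] at this
    constructor
    · intro s hs
      have hrec := pcolc_succ j L s (by rw [hlastT]; exact hST hs)
      have : ((pcolc (j + 1) L s).card : ℤ)
          = ((pcol j L').card : ℤ) - ((pcolc j L' s).card : ℤ) := by
        have := congrArg (fun x : ℕ => (x : ℤ)) hrec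
        push_cast at this
        linarith
      rw [this, hq, ih1 s hs]
      simp [alph]
      ring
    · intro x hx
      have hrec := pcolc_succ j L x (by rw [hlastT]; exact (Finset.mem_sdiff.mp hx).1)
      have : ((pcolc (j + 1) L x).card : ℤ)
          = ((pcol j L').card : ℤ) - ((pcolc j L' x).card : ℤ) := by
        have := congrArg (fun x : ℕ => (x : ℤ)) hrec
        push_cast at this
        linarith
      rw [this, hq, ih2 x hx]
      simp [alph]
      ring

theorem stmt5 (n k : ℕ) (hn : 2 ≤ n) (hk : 1 ≤ k)
    (LA LB : Fin (k + 1) → Finset ℕ) (hLA : IsTypeA n k LA) (hLB : IsTypeB n k LB) :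
    (colCount (pathGraph (k + 1)) LA : ℤ) - colCount (pathGraph (k + 1)) LB = (-1) ^ k := by
  obtain ⟨m, rfl⟩ : ∃ m, k = m + 1 := ⟨k - 1, by omega⟩
  obtain ⟨S, T, hS, hT, hST, hA0, hAl, hAi⟩ := hLA
  obtain ⟨S₁, S₂, T', hS₁, hS₂, hT', hS₁T, hS₂T, hSne, hB0, hBl, hBi⟩ := hLB
  have hlastne : ∀ i : Fin (m + 1), i.castSucc ≠ Fin.last (m + 1) :=
    fun i => (Fin.castSucc_lt_last i).ne
  have hlast0 : (Fin.last (m + 1)) ≠ (0 : Fin (m + 2)) := by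
    intro h
    have := congrArg Fin.val h
    simp [Fin.last] at this
  -- prefix lists
  set LA' : Fin (m + 1) → Finset ℕ := fun i => LA i.castSucc with hLA'def
  set LB' : Fin (m + 1) → Finset ℕ := fun i => LB i.castSucc with hLB'def
  have hLA'0 : LA' 0 = S := by simpa [hLA'def, Fin.castSucc_zero] using hA0
  have hLA'i : ∀ i : Fin (m + 1), i ≠ 0 → LA' i = T := by
    intro i hi
    exact hAi i.castSucc (by simpa [Fin.castSucc_eq_zero_iff] using hi) (hlastne i)
  have hLB'0 : LB' 0 = S₁ := by simpa [hLB'def, Fin.castSucc_zero] using hB0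
  have hLB'i : ∀ i : Fin (m + 1), i ≠ 0 → LB' i = T' := by
    intro i hi
    exact hBi i.castSucc (by simpa [Fin.castSucc_eq_zero_iff] using hi) (hlastne i)
  obtain ⟨hA1, hA2⟩ := prefix_counts n hn S T hS hT hST m LA' hLA'0 hLA'i
  obtain ⟨hB1, hB2⟩ := prefix_counts n hn S₁ T' hS₁ hT' hS₁T m LB' hLB'0 hLB'i
  have hqA := q_of n m hn S T hS hT hST LA' hLA'0 hLA'i hA1 hA2
  have hqB := q_of n m hn S₁ T' hS₁ hT' hS₁T LB' hLB'0 hLB'i hB1 hB2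
  set a : ℤ := alph n m with ha
  set ε : ℤ := (-1) ^ m with hε
  set q : ℤ := (n : ℤ) * a - ε with hq
  -- value of each pcolc for LA
  have valA : ∀ c ∈ S, ((pcolc (m + 1) LA c).card : ℤ) = q - a := by
    intro c hc
    have hrec := pcolc_succ m LA c (by rw [hAl]; exact hc)
    have := congrArg (fun x : ℕ => (x : ℤ)) hrec
    push_cast at this
    rw [show (fun i => LA i.castSucc) = LA' from rfl] at this
    rw [hA1 c hc, hqA] at this
    linarith
  have valB : ∀ c, c ∈ S₁ ∨ c ∈ T' \ S₁ → c ∈ S₂ →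
      ((pcolc (m + 1) LB c).card : ℤ) = q - (if c ∈ S₁ then a else a - ε) := by
    intro c hc hc2
    have hrec := pcolc_succ m LB c (by rw [hBl]; exact hc2)
    have hcast := congrArg (fun x : ℕ => (x : ℤ)) hrec
    push_cast at hcast
    rw [show (fun i => LB i.castSucc) = LB' from rfl] at hcast
    rw [hqB] at hcast
    rcases hc with h | h
    · rw [hB1 c h] at hcast
      rw [if_pos h]
      linarith
    · rw [hB2 c h] at hcast
      rw [if_neg (Finset.mem_sdiff.mp h).2]
      linarith
  -- counts
  have hAcard : ((colCount (pathGraph (m + 1 + 1)) LA : ℤ))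
      = ((n : ℤ) - 1) * (q - a) := by
    rw [colCount_path, pcol_partition, hAl]
    push_cast
    rw [Finset.sum_congr rfl valA, Finset.sum_const, hS]
    simp only [nsmul_eq_mul]
    have : ((n - 1 : ℕ) : ℤ) = (n : ℤ) - 1 := by
      push_cast [Nat.cast_sub (by omega : 1 ≤ n)]; ring
    rw [this]
  -- structure of S₂ relative to S₁ within T'
  have h21card : (S₂ \ S₁).card = 1 := by
    have hle : (S₂ \ S₁).card ≤ 1 := by
      have hsub : S₂ \ S₁ ⊆ T' \ S₁ := Finset.sdiff_subset_sdiff hS₂T Finset.Subset.rfl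
      have : (T' \ S₁).card = 1 := by
        rw [Finset.card_sdiff_of_subset hS₁T, hS₁, hT']; omega
      calc (S₂ \ S₁).card ≤ (T' \ S₁).card := Finset.card_le_card hsub
        _ = 1 := this
    have hpos : 0 < (S₂ \ S₁).card := by
      rw [Finset.card_pos]
      by_contra h
      rw [Finset.not_nonempty_iff_eq_empty, Finset.sdiff_eq_empty_iff_subset] at h
      exact hSne (Finset.eq_of_subset_of_card_le h (by rw [hS₁, hS₂]) ).symm
    omega
  have hintcard : (S₂ ∩ S₁).card = n - 2 := by
    have := Finset.card_inter_add_card_sdiff S₂ S₁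
    rw [h21card, hS₂] at this
    omega
  have hBcard : ((colCount (pathGraph (m + 1 + 1)) LB : ℤ))
      = ((n : ℤ) - 1) * q - (((n : ℤ) - 2) * a + (a - ε)) := by
    rw [colCount_path, pcol_partition, hBl]
    push_cast
    have hsplit : ∑ c ∈ S₂, ((pcolc (m + 1) LB c).card : ℤ)
        = ∑ c ∈ S₂ ∩ S₁, ((pcolc (m + 1) LB c).card : ℤ)
          + ∑ c ∈ S₂ \ S₁, ((pcolc (m + 1) LB c).card : ℤ) :=
      (Finset.sum_inter_add_sum_sdiff S₂ S₁ _).symm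
    rw [hsplit]
    have e1 : ∑ c ∈ S₂ ∩ S₁, ((pcolc (m + 1) LB c).card : ℤ)
        = ∑ c ∈ S₂ ∩ S₁, (q - a) := by
      apply Finset.sum_congr rfl
      intro c hc
      have hc1 : c ∈ S₁ := (Finset.mem_inter.mp hc).2
      have hc2 : c ∈ S₂ := (Finset.mem_inter.mp hc).1
      rw [valB c (Or.inl hc1) hc2, if_pos hc1]
    have e2 : ∑ c ∈ S₂ \ S₁, ((pcolc (m + 1) LB c).card : ℤ)
        = ∑ c ∈ S₂ \ S₁, (q - (a - ε)) := by
      apply Finset.sum_congr rfl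
      intro c hc
      have hc2 : c ∈ S₂ := (Finset.mem_sdiff.mp hc).1
      have hcT : c ∈ T' \ S₁ :=
        Finset.mem_sdiff.mpr ⟨hS₂T hc2, (Finset.mem_sdiff.mp hc).2⟩
      rw [valB c (Or.inr hcT) hc2, if_neg (Finset.mem_sdiff.mp hc).2]
    rw [e1, e2, Finset.sum_const, Finset.sum_const, hintcard, h21card]
    simp only [nsmul_eq_mul, one_mul]
    have : ((n - 2 : ℕ) : ℤ) = (n : ℤ) - 2 := by
      push_cast [Nat.cast_sub (by omega : 2 ≤ n)]; ring
    rw [this]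
    ring
  rw [hAcard, hBcard]
  have : (-1 : ℤ) ^ (m + 1) = -ε := by rw [hε, pow_succ]; ring
  rw [this]
  ring
end

section
/- Let n ≥ 2 and k ≥ 1. The number A_k of proper list-colorings of a path of length k under a type A (n,n−1)-list assignment equals ((n−1)/n)·((n−1)^{k+1} + (−1)^k). -/
open SimpleGraph

namespace Stmt6Aux

variable (S : Finset ℕ) (x : ℕ)

def E (j : ℕ) : Finset (Fin (j + 1) → ℕ) :=
  (Fintype.piFinset fun _ => insert x S).filter
    (fun γ => γ 0 ∈ S ∧ ∀ i : Fin j, γ i.castSucc ≠ γ i.succ)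

def a (j : ℕ) : ℕ := ((E S x j).filter fun γ => γ (Fin.last j) ≠ x).card
def b (j : ℕ) : ℕ := ((E S x j).filter fun γ => γ (Fin.last j) = x).card

lemma mem_E {j : ℕ} {γ : Fin (j + 1) → ℕ} :
    γ ∈ E S x j ↔ (∀ i, γ i ∈ insert x S) ∧ γ 0 ∈ S ∧
      ∀ i : Fin j, γ i.castSucc ≠ γ i.succ := by
  simp [E, Fintype.mem_piFinset, and_assoc]

lemma a_zero (hx : x ∉ S) : a S x 0 = S.card := by
  rw [a]
  have h1 : ((E S x 0).filter fun γ => γ (Fin.last 0) ≠ x) = E S x 0 := by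
    apply Finset.filter_true_of_mem
    intro γ hγ
    rw [mem_E] at hγ
    have h0 : γ (Fin.last 0) ∈ S := by
      rw [Fin.fin_one_eq_zero (Fin.last 0)]; exact hγ.2.1
    exact fun he => hx (he ▸ h0)
  rw [h1]
  refine Finset.card_bij' (fun γ _ => γ 0) (fun s _ => fun _ => s) ?_ ?_ ?_ ?_
  · intro γ hγ; exact ((mem_E S x).mp hγ).2.1
  · intro s hs
    rw [mem_E]
    exact ⟨fun _ => Finset.mem_insert_of_mem hs, hs, fun i => i.elim0⟩
  · intro γ _; funext i; rw [Fin.fin_one_eq_zero i]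
  · intro s _; rfl

lemma b_zero (hx : x ∉ S) : b S x 0 = 0 := by
  rw [b, Finset.card_eq_zero, Finset.filter_eq_empty_iff]
  intro γ hγ
  rw [mem_E] at hγ
  have h0 : γ (Fin.last 0) ∈ S := by
    rw [Fin.fin_one_eq_zero (Fin.last 0)]; exact hγ.2.1
  exact fun he => hx (he ▸ h0)

lemma a_succ (hx : x ∉ S) (j : ℕ) :
    a S x (j + 1) = (S.card - 1) * a S x j + S.card * b S x j := by
  have hbij : a S x (j + 1) = ∑ γ ∈ E S x j, (S.erase (γ (Fin.last j))).card := by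
    rw [a, ← Finset.card_sigma]
    refine Finset.card_bij' (fun γ _ => (⟨Fin.init γ, γ (Fin.last (j + 1))⟩ : Σ _ : Fin (j+1) → ℕ, ℕ))
      (fun p _ => Fin.snoc p.1 p.2) ?_ ?_ ?_ ?_
    · intro γ hγ
      rw [Finset.mem_filter, mem_E] at hγ
      obtain ⟨⟨hins, h0, hp⟩, hlast⟩ := hγ
      rw [Finset.mem_sigma]
      constructor
      · rw [mem_E]
        refine ⟨fun i => ?_, ?_, fun i => ?_⟩
        · simpa [Fin.init] using hins i.castSucc
        · simpa [Fin.init] using h0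
        · have := hp i.castSucc
          rw [Fin.succ_castSucc] at this
          simpa [Fin.init] using this
      · rw [Finset.mem_erase]
        constructor
        · have := hp (Fin.last j)
          rw [Fin.succ_last] at this
          simpa [Fin.init] using this.symm
        · exact (Finset.mem_insert.mp (hins (Fin.last (j + 1)))).resolve_left hlast
    · rintro ⟨γ, t⟩ hp'
      rw [Finset.mem_sigma, mem_E] at hp'
      obtain ⟨⟨hins, h0, hp⟩, ht⟩ := hp'
      rw [Finset.mem_erase] at ht
      dsimp only at ht hins h0 hp ⊢
      rw [Finset.mem_filter, mem_E]
      refine ⟨⟨fun i => ?_, ?_, fun i => ?_⟩, ?_⟩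
      · refine Fin.lastCases ?_ ?_ i
        · rw [Fin.snoc_last]; exact Finset.mem_insert_of_mem ht.2
        · intro i'; rw [Fin.snoc_castSucc]; exact hins i'
      · rw [show (0 : Fin (j + 2)) = Fin.castSucc 0 from rfl, Fin.snoc_castSucc]
        exact h0
      · refine Fin.lastCases ?_ ?_ i
        · rw [Fin.succ_last, Fin.snoc_last, Fin.snoc_castSucc]
          exact fun he => ht.1 he.symm
        · intro i'
          rw [Fin.succ_castSucc, Fin.snoc_castSucc, Fin.snoc_castSucc]
          exact hp i'
      · rw [Fin.snoc_last]
        exact fun he => hx (he ▸ ht.2)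
    · intro γ _; dsimp only; exact Fin.snoc_init_self γ
    · rintro ⟨γ, t⟩ _; dsimp only; simp
  have h1 : ∀ γ ∈ (E S x j).filter (fun γ => γ (Fin.last j) ≠ x),
      (S.erase (γ (Fin.last j))).card = S.card - 1 := by
    intro γ hγ
    rw [Finset.mem_filter, mem_E] at hγ
    exact Finset.card_erase_of_mem
      ((Finset.mem_insert.mp (hγ.1.1 (Fin.last j))).resolve_left hγ.2)
  have h2 : ∀ γ ∈ (E S x j).filter (fun γ => ¬ γ (Fin.last j) ≠ x),
      (S.erase (γ (Fin.last j))).card = S.card := by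
    intro γ hγ
    rw [Finset.mem_filter] at hγ
    rw [not_not] at hγ
    rw [hγ.2, Finset.erase_eq_of_notMem hx]
  have hb' : (E S x j).filter (fun γ => ¬ γ (Fin.last j) ≠ x)
      = (E S x j).filter (fun γ => γ (Fin.last j) = x) :=
    Finset.filter_congr (fun γ _ => by tauto)
  rw [hbij, ← Finset.sum_filter_add_sum_filter_not (E S x j) (fun γ => γ (Fin.last j) ≠ x),
    Finset.sum_congr rfl h1, Finset.sum_congr rfl h2, Finset.sum_const, Finset.sum_const,
    smul_eq_mul, smul_eq_mul, hb']
  rw [a, b, mul_comm, mul_comm _ S.card]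

lemma b_succ (hx : x ∉ S) (j : ℕ) : b S x (j + 1) = a S x j := by
  rw [a, b]
  refine Finset.card_bij' (fun γ _ => Fin.init γ) (fun γ _ => Fin.snoc γ x) ?_ ?_ ?_ ?_
  · intro γ hγ
    rw [Finset.mem_filter, mem_E] at hγ
    obtain ⟨⟨hins, h0, hp⟩, hlast⟩ := hγ
    rw [Finset.mem_filter, mem_E]
    refine ⟨⟨fun i => ?_, ?_, fun i => ?_⟩, ?_⟩
    · simpa [Fin.init] using hins i.castSucc
    · simpa [Fin.init] using h0
    · have := hp i.castSucc
      rw [Fin.succ_castSucc] at this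
      simpa [Fin.init] using this
    · have := hp (Fin.last j)
      rw [Fin.succ_last, hlast] at this
      simpa [Fin.init] using this
  · intro γ hγ
    rw [Finset.mem_filter, mem_E] at hγ
    obtain ⟨⟨hins, h0, hp⟩, hlast⟩ := hγ
    rw [Finset.mem_filter, mem_E]
    refine ⟨⟨fun i => ?_, ?_, fun i => ?_⟩, ?_⟩
    · refine Fin.lastCases ?_ ?_ i
      · rw [Fin.snoc_last]; exact Finset.mem_insert_self x S
      · intro i'; rw [Fin.snoc_castSucc]; exact hins i'
    · rw [show (0 : Fin (j + 2)) = Fin.castSucc 0 from rfl, Fin.snoc_castSucc]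
      exact h0
    · refine Fin.lastCases ?_ ?_ i
      · rw [Fin.succ_last, Fin.snoc_last, Fin.snoc_castSucc]
        exact hlast
      · intro i'
        rw [Fin.succ_castSucc, Fin.snoc_castSucc, Fin.snoc_castSucc]
        exact hp i'
    · rw [Fin.snoc_last]
  · intro γ hγ
    rw [Finset.mem_filter] at hγ
    rw [← hγ.2, Fin.snoc_init_self]
  · intro γ _; simp

lemma closed (hx : x ∉ S) (hS : 1 ≤ S.card) (j : ℕ) :
    ((S.card : ℚ) + 1) * a S x j = (S.card : ℚ) ^ (j + 2) + S.card * (-1) ^ j ∧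
    ((S.card : ℚ) + 1) * b S x j = (S.card : ℚ) ^ (j + 1) - S.card * (-1) ^ j := by
  induction j with
  | zero =>
    rw [a_zero S x hx, b_zero S x hx]
    constructor <;> push_cast <;> ring
  | succ j ih =>
    obtain ⟨ha, hb⟩ := ih
    rw [a_succ S x hx j, b_succ S x hx j]
    constructor
    · push_cast [Nat.cast_sub hS]
      linear_combination ((S.card : ℚ) - 1) * ha + (S.card : ℚ) * hb
    · linear_combination ha

end Stmt6Aux

open SimpleGraph in
lemma Stmt6Aux.proper_iff {k : ℕ} (γ : Fin (k + 1) → ℕ) :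
    (∀ v w, (pathGraph (k + 1)).Adj v w → γ v ≠ γ w) ↔
      ∀ i : Fin k, γ i.castSucc ≠ γ i.succ := by
  constructor
  · intro h i
    exact h _ _ (pathGraph_adj.mpr (Or.inl (by simp)))
  · intro h v w hadj
    rcases pathGraph_adj.mp hadj with hvw | hvw
    · have hv : v.val < k := by have := w.isLt; omega
      have hh := h ⟨v.val, hv⟩
      have e1 : ((⟨v.val, hv⟩ : Fin k)).castSucc = v := by ext; simp
      have e2 : ((⟨v.val, hv⟩ : Fin k)).succ = w := by ext; simp [hvw]
      rwa [e1, e2] at hh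
    · have hw : w.val < k := by have := v.isLt; omega
      have hh := h ⟨w.val, hw⟩
      have e1 : ((⟨w.val, hw⟩ : Fin k)).castSucc = w := by ext; simp
      have e2 : ((⟨w.val, hw⟩ : Fin k)).succ = v := by ext; simp [hvw]
      rw [e1, e2] at hh
      exact hh.symm

theorem stmt6 (n k : ℕ) (hn : 2 ≤ n) (hk : 1 ≤ k)
    (LA : Fin (k + 1) → Finset ℕ) (hLA : IsTypeA n k LA) :
    (colCount (pathGraph (k + 1)) LA : ℚ) =
      ((n : ℚ) - 1) / n * (((n : ℚ) - 1) ^ (k + 1) + (-1) ^ k) := by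
  classical
  obtain ⟨S, T, hScard, hTcard, hST, hL0, hLlast, hLmid⟩ := hLA
  have hTS : (T \ S).Nonempty := by
    rw [← Finset.card_pos, Finset.card_sdiff_of_subset hST, hScard, hTcard]; omega
  obtain ⟨x, hxmem⟩ := hTS
  obtain ⟨hxT, hxS⟩ := Finset.mem_sdiff.mp hxmem
  have hT : T = insert x S := by
    refine (Finset.eq_of_subset_of_card_le (Finset.insert_subset hxT hST) ?_).symm
    rw [Finset.card_insert_of_notMem hxS, hScard, hTcard]; omega
  have h0last : (0 : Fin (k + 1)) ≠ Fin.last k := by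
    intro h
    have := congrArg Fin.val h
    simp [Fin.last] at this
    omega
  have hcc : colCount (SimpleGraph.pathGraph (k + 1)) LA = Stmt6Aux.a S x k := by
    rw [colCount, Stmt6Aux.a]
    apply congrArg Finset.card
    ext γ
    simp only [Finset.mem_filter, Fintype.mem_piFinset, Stmt6Aux.mem_E]
    constructor
    · rintro ⟨hmem, hprop⟩
      have hTi : ∀ i, γ i ∈ insert x S := by
        intro i
        rw [← hT]
        by_cases h0 : i = 0
        · subst h0; exact hST (hL0 ▸ hmem 0)
        · by_cases hl : i = Fin.last k
          · subst hl; exact hST (hLlast ▸ hmem (Fin.last k))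
          · exact (hLmid i h0 hl) ▸ hmem i
      have hlS : γ (Fin.last k) ∈ S := hLlast ▸ hmem (Fin.last k)
      exact ⟨⟨hTi, hL0 ▸ hmem 0, (Stmt6Aux.proper_iff γ).mp hprop⟩,
        fun he => hxS (he ▸ hlS)⟩
    · rintro ⟨⟨hins, h0, hp⟩, hlast⟩
      refine ⟨fun i => ?_, (Stmt6Aux.proper_iff γ).mpr hp⟩
      by_cases hi0 : i = 0
      · subst hi0; rw [hL0]; exact h0
      · by_cases hil : i = Fin.last k
        · subst hil
          rw [hLlast]
          exact (Finset.mem_insert.mp (hins (Fin.last k))).resolve_left hlast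
        · rw [hLmid i hi0 hil, hT]; exact hins i
  have hScard1 : 1 ≤ S.card := by rw [hScard]; omega
  have hm : (S.card : ℚ) = (n : ℚ) - 1 := by
    rw [hScard, Nat.cast_sub (by omega : 1 ≤ n)]; norm_num
  have hkey := (Stmt6Aux.closed S x hxS hScard1 k).1
  rw [hm] at hkey
  rw [hcc]
  have hn0 : (n : ℚ) ≠ 0 := Nat.cast_ne_zero.mpr (by omega)
  field_simp
  linear_combination hkey
end

section
/- Let L and L' be distinct list assignments for a path P such that L(v) ⊆ L'(v) for every vertex v and |L'(v)| ≥ 2 for every v. Then col(P,L) < col(P,L'). -/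
open SimpleGraph

/-- erase nonempty when card ≥ 2 -/
private lemma erase_ne7 {s : Finset ℕ} (h : 2 ≤ s.card) (a : ℕ) : (s.erase a).Nonempty := by
  obtain ⟨b, hb, hba⟩ := Finset.exists_mem_ne (s := s) (by omega) a
  exact ⟨b, Finset.mem_erase.mpr ⟨hba, hb⟩⟩

/-- greedy extension along indices `f 0, f 1, …` -/
private noncomputable def ext7 {m : ℕ} (L' : Fin m → Finset ℕ) (h2 : ∀ v, 2 ≤ (L' v).card)
    (f : ℕ → ℕ) (c : ℕ) : ℕ → ℕ
  | 0 => c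
  | k + 1 =>
    if h : f (k + 1) < m then
      ((L' ⟨f (k + 1), h⟩).erase (ext7 L' h2 f c k)).min'
        (erase_ne7 (h2 ⟨f (k + 1), h⟩) _)
    else 0

private lemma ext7_mem {m : ℕ} (L' : Fin m → Finset ℕ) (h2 : ∀ v, 2 ≤ (L' v).card)
    (f : ℕ → ℕ) (c : ℕ) (k : ℕ) (h : f (k + 1) < m) :
    ext7 L' h2 f c (k + 1) ∈ L' ⟨f (k + 1), h⟩ ∧
      ext7 L' h2 f c (k + 1) ≠ ext7 L' h2 f c k := by
  rw [ext7, dif_pos h]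
  have := Finset.min'_mem _ (erase_ne7 (h2 ⟨f (k + 1), h⟩) (ext7 L' h2 f c k))
  rw [Finset.mem_erase] at this
  exact ⟨this.2, this.1⟩

theorem stmt7 (m : ℕ) (L L' : Fin m → Finset ℕ) (hne : L ≠ L')
    (hsub : ∀ v, L v ⊆ L' v) (hcard : ∀ v, 2 ≤ (L' v).card) :
    colCount (pathGraph m) L < colCount (pathGraph m) L' := by
  classical
  obtain ⟨w, hw⟩ : ∃ w, L w ≠ L' w := Function.ne_iff.mp hne
  obtain ⟨c, hcL', hcL⟩ := Finset.exists_of_ssubset (lt_of_le_of_ne (hsub w) hw)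
  set g : ℕ → ℕ := ext7 L' hcard (fun k => w.val + k) c with hg
  set h : ℕ → ℕ := ext7 L' hcard (fun k => w.val - k) c with hh
  set γ : Fin m → ℕ := fun v => if w.val ≤ v.val then g (v.val - w.val) else h (w.val - v.val)
    with hγ
  have hγ_def : ∀ v : Fin m,
      γ v = if w.val ≤ v.val then g (v.val - w.val) else h (w.val - v.val) := fun _ => rfl
  have hg0 : g 0 = c := rfl
  have hh0 : h 0 = c := rfl
  have hgmem : ∀ k (hk : w.val + (k + 1) < m),
      g (k + 1) ∈ L' ⟨w.val + (k + 1), hk⟩ ∧ g (k + 1) ≠ g k := by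
    intro k hk
    exact ext7_mem L' hcard (fun k => w.val + k) c k hk
  have hhmem : ∀ k (hk : w.val - (k + 1) < m),
      h (k + 1) ∈ L' ⟨w.val - (k + 1), hk⟩ ∧ h (k + 1) ≠ h k := by
    intro k hk
    exact ext7_mem L' hcard (fun k => w.val - k) c k hk
  have hγw : γ w = c := by rw [hγ_def, if_pos le_rfl, Nat.sub_self, hg0]
  have hγmem : ∀ v, γ v ∈ L' v := by
    intro v
    rcases lt_trichotomy v.val w.val with hv | hv | hv
    · have hb : w.val - ((w.val - v.val - 1) + 1) < m := by have := v.isLt; omega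
      have hvv : (⟨w.val - ((w.val - v.val - 1) + 1), hb⟩ : Fin m) = v :=
        Fin.ext (by show w.val - ((w.val - v.val - 1) + 1) = v.val; omega)
      have := (hhmem (w.val - v.val - 1) hb).1
      rw [hvv] at this
      rw [hγ_def, if_neg (by omega), (by omega : w.val - v.val = (w.val - v.val - 1) + 1)]
      exact this
    · have : v = w := Fin.ext hv
      rw [this, hγw]; exact hcL'
    · have hb : w.val + ((v.val - w.val - 1) + 1) < m := by have := v.isLt; omega
      have hvv : (⟨w.val + ((v.val - w.val - 1) + 1), hb⟩ : Fin m) = v :=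
        Fin.ext (by show w.val + ((v.val - w.val - 1) + 1) = v.val; omega)
      have := (hgmem (v.val - w.val - 1) hb).1
      rw [hvv] at this
      rw [hγ_def, if_pos (by omega), (by omega : v.val - w.val = (v.val - w.val - 1) + 1)]
      exact this
  have hγstep : ∀ u v : Fin m, u.val + 1 = v.val → γ u ≠ γ v := by
    intro u v huv
    rcases le_or_gt w.val u.val with hcase | hcase
    · -- both in g region
      have hγu : γ u = g (u.val - w.val) := by rw [hγ_def, if_pos hcase]
      have hγv : γ v = g ((u.val - w.val) + 1) := by
        rw [hγ_def, if_pos (by omega)]; congr 1; omega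
      rw [hγu, hγv]
      have hb : w.val + ((u.val - w.val) + 1) < m := by have := v.isLt; omega
      exact fun hEq => (hgmem (u.val - w.val) hb).2 hEq.symm
    · -- v.val ≤ w.val, both in h region (γ v = h (w-v) even if v = w)
      have hvw : v.val ≤ w.val := by omega
      have hγu : γ u = h ((w.val - v.val) + 1) := by
        rw [hγ_def, if_neg (by omega)]; congr 1; omega
      have hγv : γ v = h (w.val - v.val) := by
        rcases eq_or_lt_of_le hvw with hE | hE
        · have hvw' : v = w := Fin.ext hE
          rw [hvw', hγw, Nat.sub_self, hh0]
        · rw [hγ_def, if_neg (by omega)]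
      rw [hγu, hγv]
      have hb : w.val - ((w.val - v.val) + 1) < m := by have := u.isLt; omega
      exact (hhmem (w.val - v.val) hb).2
  have hγproper : ∀ u v : Fin m, (pathGraph m).Adj u v → γ u ≠ γ v := by
    intro u v hadj
    rcases pathGraph_adj.mp hadj with hc | hc
    · exact hγstep u v hc
    · exact fun hEq => hγstep v u hc hEq.symm
  unfold colCount
  apply Finset.card_lt_card
  refine (Finset.ssubset_iff_of_subset ?_).mpr ⟨γ, ?_, ?_⟩
  · intro x hx
    simp only [Finset.mem_filter, Fintype.mem_piFinset] at hx ⊢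
    exact ⟨fun v => hsub v (hx.1 v), hx.2⟩
  · simp only [Finset.mem_filter, Fintype.mem_piFinset]
    exact ⟨hγmem, hγproper⟩
  · simp only [Finset.mem_filter, Fintype.mem_piFinset, not_and]
    intro hmem
    exact absurd (hγw ▸ hmem w) hcL
end

section
/- Every cycle of length k ≥ 3 is 2-monophilic: for every assignment of 2-element color lists to its vertices, the number of proper colorings from the lists is at least col(C,2), which is 2 if k is even and 0 if k is odd. -/
open SimpleGraph

namespace Stmt9Aux

noncomputable def build (A : ℕ → Finset ℕ) (f : ℕ → ℕ) (m e : ℕ) : ℕ → ℕ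
  | 0 => if m = 0 then e else f 0
  | j + 1 => if j + 1 < m then f (j + 1) else if j + 1 = m then e
      else sInf {x : ℕ | x ∈ (A (j + 1)).erase (build A f m e j)}

variable {A : ℕ → Finset ℕ} {f : ℕ → ℕ} {m e : ℕ}

lemma build_lt {j : ℕ} (h : j < m) : build A f m e j = f j := by
  cases j with
  | zero => rw [build, if_neg (by omega)]
  | succ j => rw [build, if_pos h]

lemma build_base : build A f m e m = e := by
  cases m with
  | zero => rw [build, if_pos rfl]
  | succ n => rw [build, if_neg (by omega), if_pos rfl]

lemma build_succ {j : ℕ} (h : m ≤ j) :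
    build A f m e (j + 1) = sInf {x : ℕ | x ∈ (A (j + 1)).erase (build A f m e j)} := by
  rw [build, if_neg (by omega), if_neg (by omega)]

lemma erase_nonempty (hA : ∀ j, (A j).card = 2) (j x : ℕ) :
    {y : ℕ | y ∈ (A j).erase x}.Nonempty := by
  obtain ⟨b, hb, hne⟩ := Finset.exists_mem_ne (s := A j) (by rw [hA]; omega) x
  exact ⟨b, Finset.mem_erase.mpr ⟨hne, hb⟩⟩

lemma build_mem (hA : ∀ j, (A j).card = 2) (he : e ∈ A m) :
    ∀ j, m ≤ j → build A f m e j ∈ A j := by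
  intro j hj
  induction j with
  | zero =>
    have hm : m = 0 := by omega
    subst hm; rw [build_base]; exact he
  | succ j ih =>
    rcases Nat.lt_or_ge j m with h | h
    · have hm : m = j + 1 := by omega
      subst hm; rw [build_base]; exact he
    · rw [build_succ h]
      have := Nat.sInf_mem (erase_nonempty hA (j+1) (build A f m e j))
      exact Finset.mem_of_mem_erase this
  
lemma build_ne (hA : ∀ j, (A j).card = 2) {j : ℕ} (h : m ≤ j) :
    build A f m e (j + 1) ≠ build A f m e j := by
  rw [build_succ h]
  have := Nat.sInf_mem (erase_nonempty hA (j+1) (build A f m e j))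
  exact Finset.ne_of_mem_erase this

open Classical in
noncomputable def colSet (m : ℕ) (A : ℕ → Finset ℕ) : Finset (Fin (m+3) → ℕ) :=
  (Fintype.piFinset (fun i : Fin (m+3) => A i.val)).filter
    (fun γ => ∀ i : Fin (m+3), γ i ≠ γ (i + 1))

lemma mem_colSet {m : ℕ} {γ : Fin (m+3) → ℕ} :
    γ ∈ colSet m A ↔ (∀ i : Fin (m+3), γ i ∈ A i.val) ∧ ∀ i : Fin (m+3), γ i ≠ γ (i + 1) := by
  classical
  simp [colSet, Fintype.mem_piFinset]

lemma finAdd_val {m : ℕ} {i : Fin (m+3)} (h : i.val + 1 < m+3) : ((i+1 : Fin (m+3))).val = i.val + 1 := by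
  apply Fin.val_add_one_of_lt; rw [Fin.lt_def]; simp [Fin.last]; omega

lemma finAdd_last {m : ℕ} {i : Fin (m+3)} (h : i.val = m + 2) : i + 1 = 0 := by
  have : i = Fin.last (m+2) := Fin.ext (by simpa using h)
  rw [this, Fin.last_add_one]

lemma proper_of {m : ℕ} (γ : Fin (m+3) → ℕ)
    (h1 : ∀ j (hj : j + 1 < m+3), γ ⟨j, by omega⟩ ≠ γ ⟨j+1, hj⟩)
    (h2 : γ ⟨m+2, by omega⟩ ≠ γ ⟨0, by omega⟩) : ∀ i : Fin (m+3), γ i ≠ γ (i+1) := by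
  intro i
  rcases Nat.lt_or_ge (i.val+1) (m+3) with h | h
  · have e1 : (i+1 : Fin (m+3)) = ⟨i.val+1, h⟩ := Fin.ext (finAdd_val h)
    have e0 : i = ⟨i.val, i.isLt⟩ := rfl
    rw [e1]
    exact h1 i.val h
  · have hv : i.val = m+2 := by omega
    rw [finAdd_last hv, show i = ⟨m+2, by omega⟩ from Fin.ext hv,
      show (0 : Fin (m+3)) = ⟨0, by omega⟩ from rfl]
    exact h2

lemma proper_path {m : ℕ} {γ : Fin (m+3) → ℕ} (hp : ∀ i : Fin (m+3), γ i ≠ γ (i+1))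
    (j : ℕ) (hj : j + 1 < m+3) : γ ⟨j, by omega⟩ ≠ γ ⟨j+1, hj⟩ := by
  have := hp ⟨j, by omega⟩
  rwa [show (⟨j, by omega⟩ + 1 : Fin (m+3)) = ⟨j+1, hj⟩ from Fin.ext (finAdd_val (by simpa using hj))] at this

lemma proper_seam {m : ℕ} {γ : Fin (m+3) → ℕ} (hp : ∀ i : Fin (m+3), γ i ≠ γ (i+1)) :
    γ ⟨m+2, by omega⟩ ≠ γ ⟨0, by omega⟩ := by
  have := hp ⟨m+2, by omega⟩
  rwa [show (⟨m+2, by omega⟩ + 1 : Fin (m+3)) = ⟨0, by omega⟩ from finAdd_last rfl] at this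

lemma patch_mem {m : ℕ} (hA : ∀ j, (A j).card = 2) (f : ℕ → ℕ) (me e : ℕ)
    (hm : me ≤ m+2) (he : e ∈ A me)
    (hf_mem : ∀ j, j < me → f j ∈ A j)
    (hf_ne : ∀ j, j + 1 < me → f (j+1) ≠ f j)
    (hedge : ∀ j, j + 1 = me → e ≠ f j)
    (hseam : build A f me e 0 ∉ A (m+2)) :
    (fun i : Fin (m+3) => build A f me e i.val) ∈ colSet m A := by
  rw [mem_colSet]
  constructor
  · intro i
    rcases Nat.lt_or_ge i.val me with h | h
    · rw [build_lt h]; exact hf_mem i.val h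
    · exact build_mem hA he i.val h
  · apply proper_of
    · intro j hj
      dsimp only
      rcases Nat.lt_trichotomy (j+1) me with h | h | h
      · rw [build_lt h, build_lt (by omega)]
        exact (hf_ne j h).symm
      · rw [← h, build_base, build_lt (by omega)]
        exact (hedge j h).symm
      · exact (build_ne hA (by omega)).symm
    · dsimp only
      intro hcon
      apply hseam
      rw [← hcon]
      exact build_mem hA he (m+2) (by omega)

lemma forced {m : ℕ} (hA : ∀ j, (A j).card = 2) (hcard : (colSet m A).card ≤ 1)
    {γ : Fin (m+3) → ℕ} (hγ : γ ∈ colSet m A) (hγ0 : γ 0 ∉ A (m+2)) :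
    ∀ j (hj : j + 2 ≤ m + 3), γ ⟨j, by omega⟩ ∈ A (j+1) := by
  intro j hj
  by_contra hcon
  obtain ⟨hmem, hp⟩ := mem_colSet.mp hγ
  set f : ℕ → ℕ := fun t => if h : t < m+3 then γ ⟨t, h⟩ else 0 with hf
  obtain ⟨e, hemem, hene⟩ := Finset.exists_mem_ne (s := A (j+1))
    (by rw [hA]; omega) (γ ⟨j+1, by omega⟩)
  have hδ : (fun i : Fin (m+3) => build A f (j+1) e i.val) ∈ colSet m A := by
    apply patch_mem hA f (j+1) e (by omega) hemem
    · intro t ht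
      have ht3 : t < m + 3 := by omega
      simp only [hf, dif_pos ht3]
      exact hmem ⟨t, ht3⟩
    · intro t ht
      have h1 : t + 1 < m + 3 := by omega
      simp only [hf, dif_pos h1, dif_pos (show t < m+3 by omega)]
      exact (proper_path hp t h1).symm
    · intro t ht
      have htj : t = j := by omega
      subst htj
      simp only [hf, dif_pos (show t < m+3 by omega)]
      intro hcon2
      exact hcon (hcon2 ▸ hemem)
    · rw [build_lt (by omega)]
      simp only [hf, dif_pos (show 0 < m+3 by omega)]
      rwa [show (⟨0, by omega⟩ : Fin (m+3)) = 0 from rfl]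
  have hne : (fun i : Fin (m+3) => build A f (j+1) e i.val) ≠ γ := by
    intro hEq
    apply hene
    have := congrFun hEq ⟨j+1, by omega⟩
    dsimp only at this
    rw [build_base] at this
    exact this
  have : 1 < (colSet m A).card :=
    Finset.one_lt_card.mpr ⟨_, hδ, γ, hγ, hne⟩
  omega

lemma colSet_congr {m : ℕ} {B : ℕ → Finset ℕ} (h : ∀ j, j < m+3 → A j = B j) :
    colSet m A = colSet m B := by
  unfold colSet
  rw [show (fun i : Fin (m+3) => A i.val) = fun i : Fin (m+3) => B i.val from
    funext fun i => h i.val i.isLt]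

def rev {m : ℕ} (i : Fin (m+3)) : Fin (m+3) := ⟨m + 2 - i.val, by omega⟩

lemma rev_rev {m : ℕ} (i : Fin (m+3)) : rev (rev i) = i := by
  have := i.isLt
  exact Fin.ext (by simp [rev]; omega)

lemma rev_colSet {m : ℕ} {γ : Fin (m+3) → ℕ} (hγ : γ ∈ colSet m A) :
    (fun i => γ (rev i)) ∈ colSet m (fun j => A (m + 2 - j)) := by
  rw [mem_colSet] at hγ ⊢
  obtain ⟨hmem, hp⟩ := hγ
  constructor
  · intro i
    exact hmem (rev i)
  · apply proper_of
    · intro j hj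
      have e1 : rev (⟨j, by omega⟩ : Fin (m+3)) = ⟨(m+1-j)+1, by omega⟩ := Fin.ext (show m+2-j = (m+1-j)+1 by omega)
      have e2 : rev (⟨j+1, hj⟩ : Fin (m+3)) = ⟨m+1-j, by omega⟩ := Fin.ext (show m+2-(j+1) = m+1-j by omega)
      rw [e1, e2]
      exact (proper_path hp (m+1-j) (by omega)).symm
    · have e1 : rev (⟨m+2, by omega⟩ : Fin (m+3)) = ⟨0, by omega⟩ := Fin.ext (show m+2-(m+2) = 0 by omega)
      have e2 : rev (⟨0, by omega⟩ : Fin (m+3)) = ⟨m+2, by omega⟩ := Fin.ext (show m+2-0 = m+2 by omega)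
      rw [e1, e2]
      exact (proper_seam hp).symm

lemma card_rev {m : ℕ} : (colSet m A).card = (colSet m (fun j => A (m + 2 - j))).card := by
  have hinj : Set.InjOn (fun (γ : Fin (m+3) → ℕ) => fun i => γ (rev i)) (colSet m A) := by
    intro γ _ δ _ h
    funext i
    have := congrFun h (rev i)
    dsimp only at this
    rwa [rev_rev] at this
  rw [← Finset.card_image_of_injOn hinj]
  congr 1
  apply Finset.Subset.antisymm
  · intro δ hδ
    obtain ⟨γ, hγ, rfl⟩ := Finset.mem_image.mp hδ
    exact rev_colSet hγ
  · intro δ hδ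
    refine Finset.mem_image.mpr ⟨fun i => δ (rev i), ?_, ?_⟩
    · have h2 := rev_colSet (A := fun j => A (m + 2 - j)) hδ
      have hcs : colSet m (fun j => A (m + 2 - (m + 2 - j))) = colSet m A :=
        colSet_congr (fun j hj => by
          show A (m + 2 - (m + 2 - j)) = A j
          rw [show m + 2 - (m + 2 - j) = j by omega])
      exact hcs ▸ h2
    · funext i
      dsimp only
      rw [rev_rev]

lemma exists_mem_not_mem {s t : Finset ℕ} (h : s.card = t.card) (hne : s ≠ t) :
    ∃ x ∈ s, x ∉ t := by
  by_contra hc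
  push_neg at hc
  exact hne (Finset.eq_of_subset_of_card_le hc h.ge)

lemma card2_third {s : Finset ℕ} (h : s.card = 2) {a b c : ℕ} (ha : a ∈ s) (hb : b ∈ s)
    (hc : c ∈ s) (h1 : a ≠ b) (h2 : b ≠ c) : c = a := by
  obtain ⟨x, y, hxy, rfl⟩ := Finset.card_eq_two.mp h
  simp only [Finset.mem_insert, Finset.mem_singleton] at ha hb hc
  rcases ha with rfl | rfl <;> rcases hb with rfl | rfl <;> rcases hc with rfl | rfl <;> simp_all

lemma core_even {m : ℕ} (hA : ∀ j, (A j).card = 2) (hke : Even (m+3))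
    (hsep : A (m+2) ≠ A 0) : 2 ≤ (colSet m A).card := by
  by_contra hcard
  have hcard : (colSet m A).card ≤ 1 := by omega
  obtain ⟨c, hc0, hcK⟩ := exists_mem_not_mem (show (A 0).card = (A (m+2)).card by rw [hA, hA])
    (fun h => hsep h.symm)
  obtain ⟨d, hdK, hd0⟩ := exists_mem_not_mem (show (A (m+2)).card = (A 0).card by rw [hA, hA]) hsep
  set Ar : ℕ → Finset ℕ := fun j => A (m + 2 - j) with hAr
  have hAr2 : ∀ j, (Ar j).card = 2 := fun j => hA _
  -- forward greedy coloring
  have hγF : (fun i : Fin (m+3) => build A (fun _ => 0) 0 c i.val) ∈ colSet m A := by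
    apply patch_mem hA (fun _ => 0) 0 c (by omega) (by simpa using hc0)
    · intro t ht; omega
    · intro t ht; omega
    · intro t ht; omega
    · rw [build_base]; exact hcK
  set γ : Fin (m+3) → ℕ := fun i => build A (fun _ => 0) 0 c i.val with hγdef
  -- backward greedy coloring
  have hγB' : (fun i : Fin (m+3) => build Ar (fun _ => 0) 0 d i.val) ∈ colSet m Ar := by
    apply patch_mem hAr2 (fun _ => 0) 0 d (by omega) (by simpa [hAr] using hdK)
    · intro t ht; omega
    · intro t ht; omega
    · intro t ht; omega
    · rw [build_base]
      simpa [hAr] using hd0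
  set γB' : Fin (m+3) → ℕ := fun i => build Ar (fun _ => 0) 0 d i.val with hγB'def
  have hγB : (fun i : Fin (m+3) => γB' (rev i)) ∈ colSet m A := by
    have h2 := rev_colSet (A := Ar) hγB'
    have hcs : colSet m (fun j => Ar (m + 2 - j)) = colSet m A :=
      colSet_congr (fun j hj => by
        show A (m + 2 - (m + 2 - j)) = A j
        rw [show m + 2 - (m + 2 - j) = j by omega])
    exact hcs ▸ h2
  have hEq : (fun i : Fin (m+3) => γB' (rev i)) = γ := by
    by_contra hne
    have : 1 < (colSet m A).card := Finset.one_lt_card.mpr ⟨_, hγB, _, hγF, hne⟩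
    omega
  have hγ0 : γ 0 = c := by
    show build A (fun _ => 0) 0 c ((0 : Fin (m+3)).val) = c
    exact build_base
  have hγlast : γ ⟨m+2, by omega⟩ = d := by
    rw [← hEq]
    show γB' (rev ⟨m+2, by omega⟩) = d
    rw [show rev (⟨m+2, by omega⟩ : Fin (m+3)) = ⟨0, by omega⟩ from Fin.ext (by show m+2-(m+2) = 0; omega)]
    show build Ar (fun _ => 0) 0 d 0 = d
    exact build_base
  -- forward forcedness
  have hF : ∀ j (hj : j + 2 ≤ m + 3), γ ⟨j, by omega⟩ ∈ A (j+1) :=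
    forced hA hcard hγF (by rwa [hγ0])
  -- backward forcedness
  have hcardAr : (colSet m Ar).card ≤ 1 := by
    rw [← card_rev (A := A)]; exact hcard
  have hB' : ∀ j (hj : j + 2 ≤ m + 3), γB' ⟨j, by omega⟩ ∈ Ar (j+1) := by
    apply forced hAr2 hcardAr hγB'
    show build Ar (fun _ => 0) 0 d ((0 : Fin (m+3)).val) ∉ Ar (m+2)
    rw [show ((0 : Fin (m+3)).val) = 0 from rfl]
    rw [build_base]
    simpa [hAr] using hd0
  have hBγ : ∀ j (h : j < m+3), γB' ⟨j, h⟩ = γ ⟨m + 2 - j, by omega⟩ := by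
    intro j h
    have h2 := congrFun hEq ⟨m + 2 - j, by omega⟩
    rw [← h2]
    congr 1
    exact Fin.ext (show j = m + 2 - (m + 2 - j) by omega)
  have hB : ∀ j (h1 : 1 ≤ j) (h2 : j ≤ m + 2), γ ⟨j, by omega⟩ ∈ A (j-1) := by
    intro j h1 h2
    have h3 := hB' (m + 2 - j) (by omega)
    rw [hBγ (m + 2 - j) (by omega)] at h3
    have e1 : (⟨m + 2 - (m + 2 - j), by omega⟩ : Fin (m+3)) = ⟨j, by omega⟩ :=
      Fin.ext (by show m + 2 - (m + 2 - j) = j; omega)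
    rw [e1] at h3
    have e2 : Ar (m + 2 - j + 1) = A (j - 1) := by
      show A (m + 2 - (m + 2 - j + 1)) = A (j-1)
      rw [show m + 2 - (m + 2 - j + 1) = j - 1 by omega]
    rwa [e2] at h3
  -- membership and properness of γ
  obtain ⟨hmem, hp⟩ := mem_colSet.mp hγF
  -- two-step periodicity
  have h2step : ∀ j (hj : j + 2 ≤ m + 2), γ ⟨j+2, by omega⟩ = γ ⟨j, by omega⟩ := by
    intro j hj
    apply card2_third (hA (j+1)) (hF j (by omega))
    · have := hmem ⟨j+1, by omega⟩
      simpa using this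
    · have := hB (j+2) (by omega) (by omega)
      rwa [show j + 2 - 1 = j + 1 by omega] at this
    · exact proper_path hp j (by omega)
    · exact proper_path hp (j+1) (by omega)
  -- all odd positions equal position 1
  have hodd : ∀ j (hj1 : j ≤ m + 2), Odd j → γ ⟨j, by omega⟩ = γ ⟨1, by omega⟩ := by
    intro j
    induction j using Nat.strong_induction_on with
    | _ j ih =>
      intro hj hoddj
      rcases Nat.lt_or_ge j 3 with h3 | h3
      · have : j = 1 := by
          rcases hoddj with ⟨t, ht⟩; omega
        subst this; rfl
      · have hj2 : j - 2 + 2 = j := by omega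
        have e1 : (⟨j, by omega⟩ : Fin (m+3)) = ⟨(j-2)+2, by omega⟩ := Fin.ext (show j = j - 2 + 2 by omega)
        rw [e1, h2step (j-2) (by omega)]
        apply ih (j-2) (by omega) (by omega)
        rcases hoddj with ⟨t, ht⟩
        exact ⟨t - 1, by omega⟩
  have hlastodd : Odd (m + 2) := by
    rcases hke with ⟨t, ht⟩
    exact ⟨t - 1, by omega⟩
  have hd1 : γ ⟨1, by omega⟩ = d := by rw [← hodd (m+2) le_rfl hlastodd]; exact hγlast
  have : d ∈ A 0 := by
    have h1 := hB 1 le_rfl (by omega)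
    rwa [show (1:ℕ) - 1 = 0 from rfl, hd1] at h1
  exact hd0 this

lemma cycle_adj_iff {m : ℕ} (u v : Fin (m+3)) :
    (cycleGraph (m+3)).Adj u v ↔ u = v + 1 ∨ v = u + 1 := by
  rw [SimpleGraph.cycleGraph_adj]
  rw [sub_eq_iff_eq_add, sub_eq_iff_eq_add, add_comm (1:Fin (m+3)) v, add_comm (1:Fin (m+3)) u]

open Classical in
lemma colCount_cycle {m : ℕ} (L : Fin (m+3) → Finset ℕ) :
    colCount (cycleGraph (m+3)) L =
      ((Fintype.piFinset L).filter (fun γ => ∀ i : Fin (m+3), γ i ≠ γ (i+1))).card := by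
  unfold colCount
  congr 1
  ext γ
  simp only [Finset.mem_filter, Fintype.mem_piFinset]
  constructor
  · rintro ⟨h0, h⟩
    exact ⟨h0, fun i => h i (i+1) ((cycle_adj_iff i (i+1)).mpr (Or.inr rfl))⟩
  · rintro ⟨h0, h⟩
    refine ⟨h0, fun v w hadj => ?_⟩
    rcases (cycle_adj_iff v w).mp hadj with h1 | h1
    · subst h1
      exact (h w).symm
    · subst h1
      exact h v

open Classical in
lemma colCount_eq_colSet {m : ℕ} (L : Fin (m+3) → Finset ℕ) :
    colCount (cycleGraph (m+3)) L =
      (colSet m (fun j => if h : j < m+3 then L ⟨j, h⟩ else {0,1})).card := by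
  rw [colCount_cycle]
  have he : (fun i : Fin (m+3) =>
      (fun j => if h : j < m+3 then L ⟨j, h⟩ else ({0,1} : Finset ℕ)) i.val) = L := by
    funext i
    simp [i.isLt]
  unfold colSet
  rw [he]

open Classical in
lemma colCount_rot {m : ℕ} (L : Fin (m+3) → Finset ℕ) (t : Fin (m+3)) :
    colCount (cycleGraph (m+3)) L = colCount (cycleGraph (m+3)) (fun i => L (i + t)) := by
  rw [colCount_cycle, colCount_cycle]
  have hinj : Set.InjOn (fun (γ : Fin (m+3) → ℕ) => fun i => γ (i + t))
      ((Fintype.piFinset L).filter (fun γ => ∀ i : Fin (m+3), γ i ≠ γ (i+1))) := by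
    intro γ _ δ _ h
    funext i
    have := congrFun h (i - t)
    dsimp only at this
    rwa [sub_add_cancel] at this
  rw [← Finset.card_image_of_injOn hinj]
  congr 1
  apply Finset.Subset.antisymm
  · intro δ hδ
    obtain ⟨γ, hγ, rfl⟩ := Finset.mem_image.mp hδ
    rw [Finset.mem_filter, Fintype.mem_piFinset] at hγ ⊢
    obtain ⟨hmem, hp⟩ := hγ
    refine ⟨fun i => hmem (i + t), fun i => ?_⟩
    dsimp only
    rw [show i + 1 + t = (i + t) + 1 by abel]
    exact hp (i + t)
  · intro δ hδ
    rw [Finset.mem_filter, Fintype.mem_piFinset] at hδ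
    obtain ⟨hmem, hp⟩ := hδ
    refine Finset.mem_image.mpr ⟨fun i => δ (i - t), ?_, ?_⟩
    · rw [Finset.mem_filter, Fintype.mem_piFinset]
      constructor
      · intro i
        have := hmem (i - t)
        rwa [sub_add_cancel] at this
      · intro i
        dsimp only
        rw [show i + 1 - t = (i - t) + 1 by abel]
        exact hp (i - t)
    · funext i
      dsimp only
      rw [add_sub_cancel_right]

open Classical in
lemma parity_col_mem {m : ℕ} (L : Fin (m+3) → Finset ℕ) {a b : ℕ} (hab : a ≠ b)
    (hmem : ∀ i : Fin (m+3), (if Even i.val then a else b) ∈ L i) (hke : Even (m+3)) :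
    (fun i : Fin (m+3) => if Even i.val then a else b) ∈
      (Fintype.piFinset L).filter (fun γ => ∀ i : Fin (m+3), γ i ≠ γ (i+1)) := by
  refine Finset.mem_filter.mpr ⟨Fintype.mem_piFinset.mpr hmem, ?_⟩
  apply proper_of
  · intro j hj
    dsimp only
    rcases Nat.even_or_odd j with h | h
    · rw [if_pos h, if_neg (by simpa [Nat.even_add_one] using h)]
      exact hab
    · rw [if_neg (Nat.not_even_iff_odd.mpr h),
        if_pos (Nat.even_add_one.mpr (Nat.not_even_iff_odd.mpr h))]
      exact hab.symm
  · dsimp only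
    rw [if_neg (Nat.even_add_one.mp hke), if_pos (show Even 0 from Even.zero)]
    exact hab.symm

open Classical in
lemma count_two (m : ℕ) :
    colCount (cycleGraph (m+3)) (fun _ => ({1,2} : Finset ℕ)) = if Even (m+3) then 2 else 0 := by
  rw [colCount_cycle]
  set S := ((Fintype.piFinset (fun _ : Fin (m+3) => ({1,2} : Finset ℕ))).filter
    (fun γ => ∀ i : Fin (m+3), γ i ≠ γ (i+1))) with hS
  have key : ∀ γ ∈ S, ∀ j (h : j < m+3), γ ⟨j, h⟩ = if Even j then γ 0 else 3 - γ 0 := by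
    intro γ hγ
    obtain ⟨hmem0, hp⟩ := Finset.mem_filter.mp hγ
    have hmem : ∀ i : Fin (m+3), γ i ∈ ({1,2} : Finset ℕ) := Fintype.mem_piFinset.mp hmem0
    have hflip : ∀ (i i' : Fin (m+3)), γ i ≠ γ i' → γ i' = 3 - γ i := by
      intro i i' hne
      have h1 := hmem i
      have h2 := hmem i'
      simp only [Finset.mem_insert, Finset.mem_singleton] at h1 h2
      rcases h1 with h1 | h1 <;> rcases h2 with h2 | h2 <;> omega
    have h0 := hmem 0
    simp only [Finset.mem_insert, Finset.mem_singleton] at h0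
    intro j
    induction j with
    | zero =>
      intro h
      rw [show (⟨0, h⟩ : Fin (m+3)) = 0 from rfl, if_pos (show Even 0 from Even.zero)]
    | succ j ih =>
      intro h
      have hj : j < m+3 := by omega
      have hstep : γ ⟨j+1, h⟩ = 3 - γ ⟨j, hj⟩ := hflip _ _ (proper_path hp j h)
      rw [hstep, ih hj]
      rcases Nat.even_or_odd j with he | he
      · rw [if_pos he, if_neg (by simpa [Nat.even_add_one] using he)]
      · rw [if_neg (Nat.not_even_iff_odd.mpr he),
          if_pos (Nat.even_add_one.mpr (Nat.not_even_iff_odd.mpr he))]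
        omega
  split_ifs with hke
  · set γa : Fin (m+3) → ℕ := fun i => if Even i.val then 1 else 2 with hγa
    set γb : Fin (m+3) → ℕ := fun i => if Even i.val then 2 else 1 with hγb
    have hma : γa ∈ S := parity_col_mem _ (by omega)
      (fun i => by split_ifs <;> simp) hke
    have hmb : γb ∈ S := parity_col_mem _ (by omega)
      (fun i => by split_ifs <;> simp) hke
    have hSeq : S = {γa, γb} := by
      apply Finset.Subset.antisymm
      · intro γ hγ
        have h0 := Fintype.mem_piFinset.mp (Finset.mem_filter.mp hγ).1 0
        simp only [Finset.mem_insert, Finset.mem_singleton] at h0 ⊢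
        rcases h0 with h0 | h0
        · left
          funext i
          have hkey := key γ hγ i.val i.isLt
          rw [Fin.eta] at hkey
          rw [hkey, h0]
        · right
          funext i
          have hkey := key γ hγ i.val i.isLt
          rw [Fin.eta] at hkey
          rw [hkey, h0]
      · intro γ hγ
        simp only [Finset.mem_insert, Finset.mem_singleton] at hγ
        rcases hγ with rfl | rfl
        · exact hma
        · exact hmb
    rw [hSeq, Finset.card_insert_of_notMem, Finset.card_singleton]
    simp only [Finset.mem_singleton]
    intro hcon
    have := congrFun hcon 0
    simp only [hγa, hγb, show ((0 : Fin (m+3)).val) = 0 from rfl,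
      if_pos (show Even 0 from Even.zero)] at this
    omega
  · rw [Finset.card_eq_zero]
    apply Finset.eq_empty_of_forall_notMem
    intro γ hγ
    obtain ⟨hmem0, hp⟩ := Finset.mem_filter.mp hγ
    have hseam := proper_seam hp
    have h1 := key γ hγ (m+2) (by omega)
    have hev : Even (m+2) := by
      have h3 : ¬ (m+3) % 2 = 0 := fun hh => hke (Nat.even_iff.mpr hh)
      rw [Nat.even_iff]
      omega
    rw [if_pos hev] at h1
    exact hseam (by rw [h1]; rfl)

open Classical in
lemma even_ge2 {m : ℕ} (L : Fin (m+3) → Finset ℕ) (hL : ∀ v, (L v).card = 2)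
    (hke : Even (m+3)) : 2 ≤ colCount (cycleGraph (m+3)) L := by
  by_cases hall : ∀ i : Fin (m+3), L i = L (i + 1)
  · have hLeq : ∀ i : Fin (m+3), L i = L 0 := by
      have hnat : ∀ j (h : j < m+3), L ⟨j, h⟩ = L 0 := by
        intro j
        induction j with
        | zero => intro h; rfl
        | succ j ih =>
          intro h
          have hj : j < m + 3 := by omega
          have he : (⟨j, hj⟩ : Fin (m+3)) + 1 = ⟨j+1, h⟩ := Fin.ext (finAdd_val (by simpa using h))
          rw [← he, ← hall ⟨j, hj⟩]
          exact ih hj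
      intro i
      have := hnat i.val i.isLt
      rwa [Fin.eta] at this
    obtain ⟨a, b, hab, hab2⟩ := Finset.card_eq_two.mp (hL 0)
    rw [colCount_cycle]
    apply Finset.one_lt_card.mpr
    refine ⟨fun i : Fin (m+3) => if Even i.val then a else b, ?_,
      fun i : Fin (m+3) => if Even i.val then b else a, ?_, ?_⟩
    · exact parity_col_mem L hab
        (fun i => by rw [hLeq i, hab2]; split_ifs <;> simp) hke
    · exact parity_col_mem L hab.symm
        (fun i => by rw [hLeq i, hab2]; split_ifs <;> simp) hke
    · intro hcon
      have := congrFun hcon 0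
      simp only [show ((0 : Fin (m+3)).val) = 0 from rfl,
        if_pos (show Even 0 from Even.zero)] at this
      exact hab this
  · push_neg at hall
    obtain ⟨i, hi⟩ := hall
    rw [colCount_rot L (i + 1), colCount_eq_colSet]
    apply core_even
    · intro j
      split_ifs with h
      · exact hL _
      · decide
    · exact hke
    · rw [dif_pos (show m+2 < m+3 by omega), dif_pos (show 0 < m+3 by omega)]
      have e1 : (⟨m+2, by omega⟩ : Fin (m+3)) + (i + 1) = i := by
        rw [show (⟨m+2, by omega⟩ : Fin (m+3)) + (i+1) = (⟨m+2, by omega⟩ + 1) + i by abel]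
        rw [finAdd_last rfl, zero_add]
      have e2 : (⟨0, by omega⟩ : Fin (m+3)) + (i + 1) = i + 1 := by
        rw [show (⟨0, by omega⟩ : Fin (m+3)) = 0 from rfl, zero_add]
      rw [e1, e2]
      exact hi

end Stmt9Aux

theorem stmt9 (k : ℕ) (hk : 3 ≤ k) :
    Monophilic (cycleGraph k) 2 ∧
      colCount (cycleGraph k) (fun _ => ({1, 2} : Finset ℕ)) =
        (if Even k then 2 else 0) := by
  obtain ⟨m, rfl⟩ : ∃ m, k = m + 3 := ⟨k - 3, by omega⟩
  constructor
  · intro L hL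
    have hicc : (Finset.Icc 1 2 : Finset ℕ) = {1, 2} := by decide
    rw [show (fun _ : Fin (m+3) => (Finset.Icc 1 2 : Finset ℕ)) =
      (fun _ => ({1,2} : Finset ℕ)) from funext fun _ => hicc]
    rw [Stmt9Aux.count_two]
    split_ifs with h
    · exact Stmt9Aux.even_ge2 L hL h
    · exact Nat.zero_le _
  · exact Stmt9Aux.count_two m
end

section
/- For an even cycle C of length k ≥ 4, the 2-list assignment L that assigns {1,2} to two adjacent vertices and {2,3} to all remaining vertices satisfies col(C,L) = 2 = col(C,2); thus even cycles have minimizing 2-list assignments that are not constant. -/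
open SimpleGraph

lemma cg_adj_succ {n i : ℕ} (h : i + 1 < n + 2) :
    (cycleGraph (n+2)).Adj ⟨i, by omega⟩ ⟨i+1, h⟩ := by
  rw [cycleGraph_adj]
  right
  ext
  rw [Fin.sub_def]
  simp only [Fin.val_one]
  have : (n + 2 - i + (i + 1)) = (n + 2) + 1 := by omega
  rw [this, Nat.add_mod_left]; exact Nat.mod_eq_of_lt (by omega)

lemma cg_adj_wrap {n : ℕ} :
    (cycleGraph (n+2)).Adj ⟨n+1, by omega⟩ ⟨0, by omega⟩ := by
  rw [cycleGraph_adj]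
  right
  ext
  rw [Fin.sub_def]
  simp only [Fin.val_one, Fin.val_zero]
  have : (n + 2 - (n + 1) + 0) = 1 := by omega
  rw [this]; exact Nat.mod_eq_of_lt (by omega)

lemma parity_adj {n : ℕ} (hn : Even (n+2)) {v w : Fin (n+2)}
    (h : (cycleGraph (n+2)).Adj v w) : v.val % 2 ≠ w.val % 2 := by
  obtain ⟨m, hm⟩ := hn
  have step : ∀ v w : Fin (n+2), w - v = 1 → v.val % 2 ≠ w.val % 2 := by
    intro v w hw
    have hwe : w = v + 1 := by rwa [sub_eq_iff_eq_add'] at hw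
    have hval : w.val = (v.val + 1) % (n+2) := by rw [hwe, Fin.val_add, Fin.val_one]
    have hv := v.isLt
    by_cases hvn : v.val = n+1
    · have h0 : (n + 1 + 1) % (n + 2) = 0 := by
        rw [show n + 1 + 1 = n + 2 by omega]; exact Nat.mod_self _
      rw [hvn] at hval
      omega
    · rw [Nat.mod_eq_of_lt (by omega)] at hval; omega
  rw [cycleGraph_adj] at h
  rcases h with h | h
  · exact (step w v h).symm
  · exact step v w h

lemma chain {n : ℕ} (γ : Fin (n+2) → ℕ) (a b m : ℕ) (hm : m < n+2)
    (hmem : ∀ i : ℕ, m ≤ i → ∀ h : i < n+2, γ ⟨i,h⟩ = a ∨ γ ⟨i,h⟩ = b)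
    (hne : ∀ i : ℕ, ∀ h : i + 1 < n+2, γ ⟨i, Nat.lt_of_succ_lt h⟩ ≠ γ ⟨i+1, h⟩) :
    ∀ i, m ≤ i → ∀ h : i < n+2,
      ((i - m) % 2 = 0 → γ ⟨i,h⟩ = γ ⟨m,hm⟩) ∧
      ((i - m) % 2 = 1 → γ ⟨i,h⟩ = a + b - γ ⟨m,hm⟩) := by
  intro i
  induction i with
  | zero =>
    intro h0 h
    have : m = 0 := by omega
    subst this
    constructor
    · intro _; rfl
    · intro hc; omega
  | succ i ih =>
    intro hle h
    by_cases hmi : m = i + 1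
    · subst hmi
      constructor
      · intro _
        congr
      · intro hc; omega
    · have hle' : m ≤ i := by omega
      have h' : i < n+2 := by omega
      have ⟨ih0, ih1⟩ := ih hle' h'
      have hd := hne i h
      have h1 := hmem i hle' h'
      have h2 := hmem (i+1) (by omega) h
      have h3 := hmem m le_rfl hm
      constructor
      · intro hp
        have hp' : (i - m) % 2 = 1 := by omega
        have := ih1 hp'
        omega
      · intro hp
        have hp' : (i - m) % 2 = 0 := by omega
        have := ih0 hp'
        omega

theorem stmt10 (k : ℕ) (hk : 4 ≤ k) (hke : Even k) :
    colCount (cycleGraph k)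
        (fun i : Fin k => if i.val ≤ 1 then ({1, 2} : Finset ℕ) else {2, 3}) = 2 ∧
      colCount (cycleGraph k) (fun _ => ({1, 2} : Finset ℕ)) = 2 := by
  obtain ⟨n, rfl⟩ : ∃ n, k = n + 2 := ⟨k - 2, by omega⟩
  have hn4 : 2 ≤ n := by omega
  have hnE : n % 2 = 0 := by obtain ⟨m, hm⟩ := hke; omega
  -- generic facts
  constructor
  · -- mixed lists
    unfold colCount
    apply Finset.card_eq_two.mpr
    refine ⟨(fun i : Fin (n+2) => if i.val = 0 then 1 else if i.val % 2 = 0 then 3 else 2),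
      (fun i : Fin (n+2) => if i.val = 0 then 2 else if i.val = 1 then 1
        else if i.val % 2 = 0 then 2 else 3), ?_, ?_⟩
    · intro hcontra
      have := congrFun hcontra ⟨0, by omega⟩
      simp at this
    · ext γ
      simp only [Finset.mem_filter, Fintype.mem_piFinset, Finset.mem_insert,
        Finset.mem_singleton]
      constructor
      · rintro ⟨hmem, hprop⟩
        have hmem' : ∀ i : ℕ, ∀ h : i < n+2, i ≤ 1 → γ ⟨i,h⟩ = 1 ∨ γ ⟨i,h⟩ = 2 := by
          intro i h hi
          have := hmem ⟨i, h⟩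
          simp only [hi, if_pos] at this
          simpa using this
        have hmem2 : ∀ i : ℕ, 2 ≤ i → ∀ h : i < n+2, γ ⟨i,h⟩ = 2 ∨ γ ⟨i,h⟩ = 3 := by
          intro i hi h
          have := hmem ⟨i, h⟩
          rw [if_neg (by simpa using by omega : ¬ ((⟨i,h⟩ : Fin (n+2)).val ≤ 1))] at this
          simpa using this
        have hne : ∀ i : ℕ, ∀ h : i + 1 < n+2, γ ⟨i, Nat.lt_of_succ_lt h⟩ ≠ γ ⟨i+1, h⟩ :=
          fun i h => hprop _ _ (cg_adj_succ h)
        have hwrap : γ ⟨n+1, by omega⟩ ≠ γ ⟨0, by omega⟩ := hprop _ _ cg_adj_wrap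
        have key := chain γ 2 3 2 (by omega) hmem2 hne
        have h0 := hmem' 0 (by omega) (by omega)
        have h1 := hmem' 1 (by omega) (by omega)
        have h2 := hmem2 2 le_rfl (by omega)
        have hne01 := hne 0 (by omega)
        have hne12 := hne 1 (by omega)
        simp only [Nat.reduceAdd] at hne01 hne12
        have hlast := (key (n+1) (by omega) (by omega)).2 (by omega)
        rcases h0 with h0 | h0
        · left
          have h1' : γ ⟨1, by omega⟩ = 2 := by omega
          have h2' : γ ⟨2, by omega⟩ = 3 := by omega
          funext x
          obtain ⟨i, h⟩ := x
          match i, h with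
          | 0, h => simpa using h0
          | 1, h => simpa using h1'
          | (j+2), h =>
            have hk2 := key (j+2) (by omega) h
            by_cases hp : (j+2) % 2 = 0
            · have := hk2.1 (by omega)
              simp only [hp, if_neg (by omega : ¬ (j+2 = 0)), if_pos]
              omega
            · have := hk2.2 (by omega)
              rw [if_neg (by omega : ¬ (j+2 = 0)), if_neg (by omega : ¬ ((j+2) % 2 = 0))]
              omega
        · right
          have h1' : γ ⟨1, by omega⟩ = 1 := by omega
          have h2' : γ ⟨2, by omega⟩ = 2 := by
            rcases h2 with h2 | h2
            · exact h2
            · exfalso; rw [h2] at hlast; omega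
          funext x
          obtain ⟨i, h⟩ := x
          match i, h with
          | 0, h => simpa using h0
          | 1, h => simpa using h1'
          | (j+2), h =>
            have hk2 := key (j+2) (by omega) h
            by_cases hp : (j+2) % 2 = 0
            · have := hk2.1 (by omega)
              rw [if_neg (by omega : ¬ (j+2 = 0)), if_neg (by omega : ¬ (j+2 = 1)),
                if_pos hp]
              omega
            · have := hk2.2 (by omega)
              rw [if_neg (by omega : ¬ (j+2 = 0)), if_neg (by omega : ¬ (j+2 = 1)),
                if_neg hp]
              omega
      · rintro (rfl | rfl) <;>
        · constructor
          · intro i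
            rcases i with ⟨i, h⟩
            by_cases h0 : i = 0
            · subst h0; simp
            · by_cases h1 : i = 1
              · subst h1; simp
              · have : ¬ (i ≤ 1) := by omega
                simp only [this, if_neg, not_false_iff]
                by_cases hp : i % 2 = 0 <;> simp [h0, h1, hp]
          · intro v w hadj
            have hp := parity_adj hke hadj
            simp only
            split_ifs <;> omega
  · -- constant lists
    unfold colCount
    apply Finset.card_eq_two.mpr
    refine ⟨(fun i : Fin (n+2) => if i.val % 2 = 0 then 1 else 2),
      (fun i : Fin (n+2) => if i.val % 2 = 0 then 2 else 1), ?_, ?_⟩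
    · intro hcontra
      have := congrFun hcontra ⟨0, by omega⟩
      simp at this
    · ext γ
      simp only [Finset.mem_filter, Fintype.mem_piFinset, Finset.mem_insert,
        Finset.mem_singleton]
      constructor
      · rintro ⟨hmem, hprop⟩
        have hmem' : ∀ i : ℕ, 0 ≤ i → ∀ h : i < n+2, γ ⟨i,h⟩ = 1 ∨ γ ⟨i,h⟩ = 2 := by
          intro i _ h
          have := hmem ⟨i, h⟩
          simpa using this
        have hne : ∀ i : ℕ, ∀ h : i + 1 < n+2, γ ⟨i, Nat.lt_of_succ_lt h⟩ ≠ γ ⟨i+1, h⟩ :=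
          fun i h => hprop _ _ (cg_adj_succ h)
        have key := chain γ 1 2 0 (by omega) hmem' hne
        have h0 := hmem' 0 le_rfl (by omega)
        rcases h0 with h0 | h0
        · left
          funext x
          obtain ⟨i, h⟩ := x
          have hk2 := key i (by omega) h
          by_cases hp : i % 2 = 0
          · have := hk2.1 (by simpa using hp)
            simp only [if_pos hp]
            omega
          · have := hk2.2 (by omega)
            simp only [if_neg hp]
            omega
        · right
          funext x
          obtain ⟨i, h⟩ := x
          have hk2 := key i (by omega) h
          by_cases hp : i % 2 = 0
          · have := hk2.1 (by simpa using hp)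
            simp only [if_pos hp]
            omega
          · have := hk2.2 (by omega)
            simp only [if_neg hp]
            omega
      · rintro (rfl | rfl) <;>
        · constructor
          · intro i
            by_cases hp : i.val % 2 = 0 <;> simp [hp]
          · intro v w hadj
            have hp := parity_adj hke hadj
            simp only
            split_ifs <;> omega
end

section
/- A connected graph G is n-monophilic if and only if its core is n-monophilic, where the core is obtained by repeatedly deleting vertices of degree 1. -/
open SimpleGraph

open Classical in
/-- One step of core formation: delete a vertex whose degree in the induced
subgraph on `s` equals 1. -/
noncomputable def DelStep {V : Type*} [Fintype V] (G : SimpleGraph V) (s t : Finset V) : Prop :=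
  ∃ v ∈ s, (s.filter fun w => G.Adj v w).card = 1 ∧ t = s.erase v

open Classical in
/-- `s` is (the vertex set of) the core of `G`: it is obtained from the full vertex set by
repeatedly deleting vertices of degree 1, and no vertex of `s` has degree 1 in the
induced subgraph on `s`. -/
noncomputable def IsCore {V : Type*} [Fintype V] (G : SimpleGraph V) (s : Finset V) : Prop :=
  Relation.ReflTransGen (DelStep G) Finset.univ s ∧
    ∀ v ∈ s, (s.filter fun w => G.Adj v w).card ≠ 1

section Aux
open Classical Finset
variable {V : Type*} [Fintype V]

open Classical in
noncomputable def cnt (G : SimpleGraph V) (s : Finset V) (L : V → Finset ℕ) : ℕ :=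
  ((Fintype.piFinset fun v => if v ∈ s then L v else {0}).filter
    fun γ => ∀ v ∈ s, ∀ w ∈ s, G.Adj v w → γ v ≠ γ w).card

def Mono' (G : SimpleGraph V) (s : Finset V) (n : ℕ) : Prop :=
  ∀ L : V → Finset ℕ, (∀ v ∈ s, (L v).card = n) →
    cnt G s (fun _ => Finset.Icc 1 n) ≤ cnt G s L

open Classical in
lemma cnt_congr (G : SimpleGraph V) (s : Finset V) {L L' : V → Finset ℕ}
    (h : ∀ v ∈ s, L v = L' v) : cnt G s L = cnt G s L' := by
  unfold cnt
  have : (fun v => if v ∈ s then L v else {0}) = (fun v => if v ∈ s then L' v else {0}) := by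
    funext v
    by_cases hv : v ∈ s <;> simp [hv, h]
  rw [this]

open Classical in
lemma cnt_univ (G : SimpleGraph V) (L : V → Finset ℕ) : cnt G Finset.univ L = colCount G L := by
  unfold cnt colCount
  have h1 : (fun v => if v ∈ (Finset.univ : Finset V) then L v else {0}) = L := by
    funext v; simp
  rw [h1]
  apply Finset.card_bij (fun γ _ => γ)
  · intro γ hγ
    simp only [Finset.mem_filter] at hγ ⊢
    exact ⟨hγ.1, fun v w h => hγ.2 v (Finset.mem_univ v) w (Finset.mem_univ w) h⟩
  · intro a b _ _ h; exact h
  · intro γ hγ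
    simp only [Finset.mem_filter] at hγ
    exact ⟨γ, by simp only [Finset.mem_filter]; exact ⟨hγ.1, fun v _ w _ h => hγ.2 v w h⟩, rfl⟩

open Classical in
lemma cnt_induce (G : SimpleGraph V) (s : Finset V) (L : V → Finset ℕ) :
    colCount (G.induce (↑s : Set V)) (fun v => L ↑v) = cnt G s L := by
  unfold cnt colCount
  refine Finset.card_nbij' (fun γ => fun w => if hw : w ∈ s then γ ⟨w, hw⟩ else 0)
    (fun δ => fun v : (↑s : Set V) => δ ↑v) ?_ ?_ ?_ ?_
  · intro γ hγ
    simp only [Finset.mem_coe, Finset.mem_filter, Fintype.mem_piFinset] at hγ ⊢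
    constructor
    · intro v
      by_cases hv : v ∈ s
      · simpa [hv] using hγ.1 ⟨v, hv⟩
      · simp [hv]
    · intro v hv w hw hadj hne
      exact hγ.2 ⟨v, hv⟩ ⟨w, hw⟩ hadj (by simpa [hv, hw] using hne)
  · intro δ hδ
    simp only [Finset.mem_coe, Finset.mem_filter, Fintype.mem_piFinset] at hδ ⊢
    constructor
    · intro v
      have := hδ.1 ↑v
      simpa [v.2, Finset.mem_coe.mp v.2] using this
    · intro v w hadj
      exact hδ.2 ↑v (Finset.mem_coe.mp v.2) ↑w (Finset.mem_coe.mp w.2) hadj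
  · intro γ _; funext v; simp [Finset.mem_coe.mp v.2]
  · intro δ hδ
    funext w
    by_cases hw : w ∈ s
    · simp [hw]
    · simp only [hw, dif_neg, not_false_iff]
      simp only [Finset.mem_coe, Finset.mem_filter, Fintype.mem_piFinset] at hδ
      have := hδ.1 w
      simp [hw] at this
      exact this.symm


open Classical in
lemma mono'_univ_iff (G : SimpleGraph V) (n : ℕ) : Monophilic G n ↔ Mono' G Finset.univ n := by
  constructor
  · intro h L hL
    rw [cnt_univ, cnt_univ]
    exact h L (fun v => hL v (Finset.mem_univ v))
  · intro h L hL
    have := h L (fun v _ => hL v)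
    rwa [cnt_univ, cnt_univ] at this

open Classical in
lemma mono'_induce_iff (G : SimpleGraph V) (s : Finset V) (n : ℕ) :
    Monophilic (G.induce (↑s : Set V)) n ↔ Mono' G s n := by
  constructor
  · intro h L hL
    rw [← cnt_induce, ← cnt_induce]
    exact h (fun v => L ↑v) (fun v => hL ↑v (Finset.mem_coe.mp v.2))
  · intro h L hL
    set L' : V → Finset ℕ := fun w => if hw : w ∈ s then L ⟨w, hw⟩ else Finset.Icc 1 n with hL'def
    have h1 : (fun v : (↑s : Set V) => L' ↑v) = L := by
      funext v; simp [L', Finset.mem_coe.mp v.2]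
    have key := h L' (fun v hv => by simp [L', hv, hL ⟨v, hv⟩])
    have e1 := cnt_induce G s (fun _ => Finset.Icc 1 n)
    have e2 := cnt_induce G s L'
    rw [h1] at e2
    rw [← e1, ← e2] at key
    exact key

open Classical in
lemma mono'_zero (G : SimpleGraph V) (s : Finset V) : Mono' G s 0 := by
  intro L hL
  refine le_of_eq (cnt_congr G s fun v hv => ?_)
  rw [Finset.card_eq_zero.mp (hL v hv)]
  exact Finset.Icc_eq_empty (by omega)

open Classical in
lemma mono'_one (G : SimpleGraph V) (s : Finset V) : Mono' G s 1 := by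
  intro L hL
  by_cases h0 : cnt G s (fun _ => Finset.Icc 1 1) = 0
  · rw [h0]; exact Nat.zero_le _
  · obtain ⟨γ, hγ⟩ := Finset.card_pos.mp (Nat.pos_of_ne_zero h0)
    simp only [Finset.mem_filter, Fintype.mem_piFinset] at hγ
    have hnoedge : ∀ v ∈ s, ∀ w ∈ s, ¬ G.Adj v w := by
      intro v hv w hw hadj
      have h1 : γ v = 1 := by have := hγ.1 v; simp [hv, Finset.mem_Icc] at this; omega
      have h2 : γ w = 1 := by have := hγ.1 w; simp [hw, Finset.mem_Icc] at this; omega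
      exact hγ.2 v hv w hw hadj (by rw [h1, h2])
    have hL1 : cnt G s L = 1 := by
      unfold cnt
      rw [Finset.filter_true_of_mem
        (fun δ _ => fun a ha b hb hadj => absurd hadj (hnoedge a ha b hb))]
      rw [Fintype.card_piFinset]
      apply Finset.prod_eq_one
      intro v _
      by_cases hv : v ∈ s <;> simp [hv, hL v]
    have hle : cnt G s (fun _ => Finset.Icc 1 1) ≤ 1 := by
      calc cnt G s (fun _ => Finset.Icc 1 1)
          ≤ (Fintype.piFinset fun v => if v ∈ s then Finset.Icc 1 1 else {0}).card :=
            Finset.card_filter_le _ _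
        _ = 1 := by
            rw [Fintype.card_piFinset]
            apply Finset.prod_eq_one
            intro v _
            by_cases hv : v ∈ s <;> simp [hv]
    omega

open Classical in
lemma cnt_step (G : SimpleGraph V) (s : Finset V) (v u : V) (hv : v ∈ s)
    (hfil : s.filter (fun w => G.Adj v w) = {u}) (L : V → Finset ℕ) :
    cnt G s L = ∑ δ ∈ ((Fintype.piFinset fun w => if w ∈ s.erase v then L w else {0}).filter
      fun δ => ∀ a ∈ s.erase v, ∀ b ∈ s.erase v, G.Adj a b → δ a ≠ δ b),
      ((L v).erase (δ u)).card := by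
  have hu : u ∈ s ∧ G.Adj v u := by
    have := Finset.mem_singleton_self u
    rw [← hfil, Finset.mem_filter] at this
    exact this
  have hvu : v ≠ u := G.ne_of_adj hu.2
  have huerase : u ∈ s.erase v := Finset.mem_erase.mpr ⟨hvu.symm, hu.1⟩
  unfold cnt
  rw [Finset.card_eq_sum_card_fiberwise
    (f := fun γ => Function.update γ v 0)
    (t := (Fintype.piFinset fun w => if w ∈ s.erase v then L w else {0}).filter
      fun δ => ∀ a ∈ s.erase v, ∀ b ∈ s.erase v, G.Adj a b → δ a ≠ δ b) ?hmap]
  case hmap =>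
    intro γ hγ
    simp only [Finset.mem_coe, Finset.mem_filter, Fintype.mem_piFinset] at hγ ⊢
    refine ⟨fun w => ?_, fun a ha b hb hadj => ?_⟩
    · by_cases hwv : w = v
      · subst hwv
        simp [Function.update_self, Finset.mem_erase]
      · rw [Function.update_of_ne hwv]
        have := hγ.1 w
        by_cases hws : w ∈ s
        · simpa [Finset.mem_erase, hwv, hws] using (by simpa [hws] using this)
        · simpa [Finset.mem_erase, hwv, hws] using (by simpa [hws] using this)
    · rw [Function.update_of_ne (Finset.mem_erase.mp ha).1,
        Function.update_of_ne (Finset.mem_erase.mp hb).1]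
      exact hγ.2 a (Finset.mem_of_mem_erase ha) b (Finset.mem_of_mem_erase hb) hadj
  apply Finset.sum_congr rfl
  intro δ hδ
  simp only [Finset.mem_filter, Fintype.mem_piFinset] at hδ
  have hδv : δ v = 0 := by
    have := hδ.1 v
    simp [Finset.mem_erase] at this
    exact this
  refine Finset.card_nbij' (fun γ => γ v) (fun c => Function.update δ v c) ?_ ?_ ?_ ?_
  · intro γ hγ
    simp only [Finset.mem_coe, Finset.mem_filter, Fintype.mem_piFinset] at hγ
    obtain ⟨⟨hpi, hproper⟩, hfib⟩ := hγ
    have h1 : γ v ∈ L v := by simpa [hv] using hpi v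
    have h2 : δ u = γ u := by
      rw [← hfib, Function.update_of_ne hvu.symm]
    refine Finset.mem_erase.mpr ⟨?_, h1⟩
    rw [h2]
    exact hproper v hv u hu.1 hu.2
  · intro c hc
    rw [Finset.mem_coe, Finset.mem_erase] at hc
    simp only [Finset.mem_coe, Finset.mem_filter, Fintype.mem_piFinset]
    refine ⟨⟨fun w => ?_, fun a ha b hb hadj => ?_⟩, ?_⟩
    · by_cases hwv : w = v
      · subst hwv; simpa [Function.update_self, hv] using hc.2
      · rw [Function.update_of_ne hwv]
        have := hδ.1 w
        by_cases hws : w ∈ s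
        · simpa [hws] using (by simpa [Finset.mem_erase, hwv, hws] using this)
        · simpa [hws] using (by simpa [Finset.mem_erase, hwv, hws] using this)
    · by_cases hav : a = v
      · subst hav
        have hbu : b = u := by
          have : b ∈ s.filter (fun w => G.Adj a w) := Finset.mem_filter.mpr ⟨hb, hadj⟩
          rw [hfil, Finset.mem_singleton] at this
          exact this
        subst hbu
        rw [Function.update_self, Function.update_of_ne hvu.symm]
        exact hc.1
      · by_cases hbv : b = v
        · subst hbv
          have hau : a = u := by
            have : a ∈ s.filter (fun w => G.Adj b w) :=
              Finset.mem_filter.mpr ⟨ha, hadj.symm⟩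
            rw [hfil, Finset.mem_singleton] at this
            exact this
          subst hau
          rw [Function.update_self, Function.update_of_ne hvu.symm]
          exact fun h => hc.1 h.symm
        · rw [Function.update_of_ne hav, Function.update_of_ne hbv]
          exact hδ.2 a (Finset.mem_erase.mpr ⟨hav, ha⟩) b (Finset.mem_erase.mpr ⟨hbv, hb⟩) hadj
    · funext w
      by_cases hwv : w = v
      · subst hwv; rw [Function.update_self, hδv]
      · rw [Function.update_of_ne hwv, Function.update_of_ne hwv]
  · intro γ hγ
    simp only [Finset.mem_coe, Finset.mem_filter] at hγ
    show Function.update δ v (γ v) = γ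
    funext w
    by_cases hwv : w = v
    · subst hwv; rw [Function.update_self]
    · rw [Function.update_of_ne hwv, ← hγ.2, Function.update_of_ne hwv]
  · intro c _
    show Function.update δ v c v = c
    rw [Function.update_self]

open Classical in
lemma cnt_lower (G : SimpleGraph V) (s : Finset V) (v u : V) (hv : v ∈ s)
    (hfil : s.filter (fun w => G.Adj v w) = {u}) (L : V → Finset ℕ) (n : ℕ)
    (hcard : (L v).card = n) :
    (n - 1) * cnt G (s.erase v) L ≤ cnt G s L := by
  rw [cnt_step G s v u hv hfil L]
  unfold cnt
  set T := (Fintype.piFinset fun w => if w ∈ s.erase v then L w else {0}).filter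
      fun δ => ∀ a ∈ s.erase v, ∀ b ∈ s.erase v, G.Adj a b → δ a ≠ δ b with hT
  calc (n - 1) * T.card = ∑ _δ ∈ T, (n - 1) := by
        rw [Finset.sum_const, smul_eq_mul, mul_comm]
    _ ≤ ∑ δ ∈ T, ((L v).erase (δ u)).card := by
        apply Finset.sum_le_sum
        intro δ _
        calc n - 1 = (L v).card - 1 := by rw [hcard]
          _ ≤ ((L v).erase (δ u)).card := Finset.pred_card_le_card_erase

open Classical in
lemma cnt_exact (G : SimpleGraph V) (s : Finset V) (v u : V) (hv : v ∈ s)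
    (hfil : s.filter (fun w => G.Adj v w) = {u}) (L : V → Finset ℕ) (n : ℕ)
    (hcard : (L v).card = n) (hsub : L u ⊆ L v) :
    cnt G s L = (n - 1) * cnt G (s.erase v) L := by
  have hu : u ∈ s ∧ G.Adj v u := by
    have := Finset.mem_singleton_self u
    rw [← hfil, Finset.mem_filter] at this
    exact this
  have hvu : v ≠ u := G.ne_of_adj hu.2
  rw [cnt_step G s v u hv hfil L]
  unfold cnt
  rw [Finset.sum_congr rfl (g := fun _ => n - 1) ?_, Finset.sum_const, smul_eq_mul, mul_comm]
  intro δ hδ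
  simp only [Finset.mem_filter, Fintype.mem_piFinset] at hδ
  have hδu : δ u ∈ L v := by
    apply hsub
    have := hδ.1 u
    simpa [Finset.mem_erase.mpr ⟨hvu.symm, hu.1⟩] using this
  rw [Finset.card_erase_of_mem hδu, hcard]

open Classical in
lemma mono'_step (G : SimpleGraph V) {s t : Finset V} (h : DelStep G s t) (n : ℕ) :
    Mono' G s n ↔ Mono' G t n := by
  obtain ⟨v, hv, hdeg, rfl⟩ := h
  obtain ⟨u, hfil⟩ := Finset.card_eq_one.mp hdeg
  have hu : u ∈ s ∧ G.Adj v u := by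
    have := Finset.mem_singleton_self u
    rw [← hfil, Finset.mem_filter] at this
    exact this
  have hvu : v ≠ u := G.ne_of_adj hu.2
  have huerase : u ∈ s.erase v := Finset.mem_erase.mpr ⟨hvu.symm, hu.1⟩
  have hIcc : ∀ m : ℕ, (Finset.Icc 1 m).card = m := fun m => by
    rw [Nat.card_Icc]; omega
  match n with
  | 0 => simp [mono'_zero]
  | 1 => simp [mono'_one]
  | (m+2) =>
    constructor
    · intro hs L hL
      set L' : V → Finset ℕ := Function.update L v (L u) with hL'def
      have hL' : ∀ w ∈ s, (L' w).card = m + 2 := by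
        intro w hw
        by_cases hwv : w = v
        · subst hwv
          rw [hL'def, Function.update_self]
          exact hL u huerase
        · rw [hL'def, Function.update_of_ne hwv]
          exact hL w (Finset.mem_erase.mpr ⟨hwv, hw⟩)
      have key := hs L' hL'
      have e1 : cnt G s (fun _ => Finset.Icc 1 (m+2))
          = (m + 2 - 1) * cnt G (s.erase v) (fun _ => Finset.Icc 1 (m+2)) :=
        cnt_exact G s v u hv hfil _ (m+2) (hIcc (m+2)) (Finset.Subset.refl _)
      have e2 : cnt G s L' = (m + 2 - 1) * cnt G (s.erase v) L' := by
        apply cnt_exact G s v u hv hfil L' (m+2)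
        · rw [hL'def, Function.update_self]; exact hL u huerase
        · rw [hL'def, Function.update_self, Function.update_of_ne hvu.symm]
      have e3 : cnt G (s.erase v) L' = cnt G (s.erase v) L := by
        apply cnt_congr
        intro w hw
        rw [hL'def, Function.update_of_ne (Finset.mem_erase.mp hw).1]
      rw [e1, e2, e3] at key
      exact Nat.le_of_mul_le_mul_left key (by omega)
    · intro ht L hL
      have e1 : cnt G s (fun _ => Finset.Icc 1 (m+2))
          = (m + 2 - 1) * cnt G (s.erase v) (fun _ => Finset.Icc 1 (m+2)) :=
        cnt_exact G s v u hv hfil _ (m+2) (hIcc (m+2)) (Finset.Subset.refl _)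
      have h2 := ht L (fun w hw => hL w (Finset.mem_of_mem_erase hw))
      have h3 : (m + 2 - 1) * cnt G (s.erase v) L ≤ cnt G s L :=
        cnt_lower G s v u hv hfil L (m+2) (hL v hv)
      rw [e1]
      exact le_trans (Nat.mul_le_mul_left _ h2) h3

end Aux

theorem stmt11 {V : Type*} [Fintype V] (G : SimpleGraph V) (hconn : G.Connected)
    (n : ℕ) (s : Finset V) (hs : IsCore G s) :
    Monophilic G n ↔ Monophilic (G.induce (↑s : Set V)) n := by
  have chain : ∀ t : Finset V, Relation.ReflTransGen (DelStep G) Finset.univ t →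
      (Mono' G Finset.univ n ↔ Mono' G t n) := by
    intro t h
    induction h with
    | refl => exact Iff.rfl
    | tail _ hstep ih => exact ih.trans (mono'_step G hstep n)
  rw [mono'_univ_iff, mono'_induce_iff]
  exact chain s hs.1
end
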